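/- arXiv:1805.10657 — 6 statements merged into one kernel-verified Lean document; each statement's English description precedes it below -/
import Mathlib

section
/- If a graph G has arboricity at most α, then the iterative process in which in each round all vertices with at most 3α currently-active neighbors become inactive, starting from all vertices active, terminates with all vertices inactive within O(log n) rounds. -/
/-- `G` has arboricity at most `k`: its edge set can be partitioned into at most
`k` forests. -/
def SimpleGraph.HasArboricityLE {V : Type*} (G : SimpleGraph V) (k : ℕ) : Prop :=
  ∃ f : Sym2 V → ℕ, (∀ e ∈ G.edgeSet, f e < k) ∧
    ∀ i : ℕ, (SimpleGraph.fromEdgeSet {e | e ∈ G.edgeSet ∧ f e = i}).IsAcyclic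

/-- The set of vertices that are still active after `t` rounds of the peeling
process in which every active vertex with at most `3α` active neighbors becomes
inactive. -/
def peel {V : Type*} [Fintype V] [DecidableEq V] (G : SimpleGraph V)
    [DecidableRel G.Adj] (α : ℕ) : ℕ → Finset V
  | 0 => Finset.univ
  | (i+1) => (peel G α i).filter
      (fun v => 3 * α < ((G.neighborFinset v) ∩ peel G α i).card)


section Aux
open SimpleGraph Finset
variable {V : Type*}


/-- In an acyclic graph, a vertex `v` has at most one neighbor strictly closer to `r`. -/
lemma forest_near_unique [DecidableEq V] {H : SimpleGraph V} (hH : H.IsAcyclic) {u u' v r : V}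
    (h : H.Adj u v) (h' : H.Adj u' v) (hvr : H.Reachable v r)
    (hu : H.dist u r < H.dist v r) (hu' : H.dist u' r < H.dist v r) : u = u' := by
  have build : ∀ (x : V) (hx : H.Adj x v) (hlt : H.dist x r < H.dist v r),
      ∃ q : H.Walk v r, q.IsPath ∧ q.support.tail.head? = some x := by
    intro x hx hlt
    obtain ⟨p, hp, hlen⟩ := (hx.reachable.trans hvr).exists_path_of_dist
    have hvs : v ∉ p.support := by
      intro hv
      have h1 : H.dist v r ≤ (p.dropUntil v hv).length := SimpleGraph.dist_le _
      have h2 : (p.dropUntil v hv).length ≤ p.length := SimpleGraph.Walk.length_dropUntil_le p hv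
      omega
    refine ⟨SimpleGraph.Walk.cons hx.symm p, hp.cons hvs, ?_⟩
    simp only [SimpleGraph.Walk.support_cons, List.tail_cons]
    rw [p.support_eq_cons]
    rfl
  obtain ⟨q1, hq1, hs1⟩ := build u h hu
  obtain ⟨q2, hq2, hs2⟩ := build u' h' hu'
  have : (⟨q1, hq1⟩ : H.Path v r) = ⟨q2, hq2⟩ := hH.path_unique _ _
  have hq : q1 = q2 := congrArg Subtype.val this
  rw [hq, hs2] at hs1
  exact (Option.some.inj hs1).symm

/-- In an acyclic graph, adjacent vertices have different distances to a common root. -/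
lemma forest_dist_ne [DecidableEq V] {H : SimpleGraph V} (hH : H.IsAcyclic) {u v r : V}
    (h : H.Adj u v) (hvr : H.Reachable v r) :
    H.dist u r ≠ H.dist v r := by
  intro heq
  obtain ⟨p, hp, hlen⟩ := ((h.reachable).trans hvr).exists_path_of_dist
  by_cases hv : v ∈ p.support
  · have h1 : H.dist v r ≤ (p.dropUntil v hv).length := SimpleGraph.dist_le _
    have h2 : (p.takeUntil v hv).length + (p.dropUntil v hv).length = p.length := by
      have := SimpleGraph.Walk.take_spec p hv
      calc (p.takeUntil v hv).length + (p.dropUntil v hv).length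
          = ((p.takeUntil v hv).append (p.dropUntil v hv)).length :=
            (SimpleGraph.Walk.length_append _ _).symm
        _ = p.length := by rw [this]
    have h3 : 1 ≤ (p.takeUntil v hv).length := by
      have hd : 0 < H.dist u v := h.reachable.pos_dist_of_ne h.ne
      have := SimpleGraph.dist_le (p.takeUntil v hv)
      omega
    omega
  · obtain ⟨p2, hp2, hlen2⟩ := hvr.exists_path_of_dist
    have : (⟨SimpleGraph.Walk.cons h.symm p, hp.cons hv⟩ : H.Path v r) = ⟨p2, hp2⟩ :=
      hH.path_unique _ _
    have hq : SimpleGraph.Walk.cons h.symm p = p2 := congrArg Subtype.val this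
    have : (SimpleGraph.Walk.cons h.symm p).length = p2.length := by rw [hq]
    simp [SimpleGraph.Walk.length_cons] at this
    omega


lemma forest_pairs_le [DecidableEq V] {H : SimpleGraph V} [DecidableRel H.Adj]
    (hH : H.IsAcyclic) (S : Finset V) :
    ((S ×ˢ S).filter fun p => H.Adj p.1 p.2).card ≤ 2 * S.card := by
  classical
  set rt : V → V := fun x => Quot.out (H.connectedComponentMk x) with hrt
  have hreach : ∀ x, H.Reachable x (rt x) := by
    intro x
    have : H.connectedComponentMk (rt x) = H.connectedComponentMk x := Quot.out_eq _
    exact (SimpleGraph.ConnectedComponent.exact this).symm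
  have hrt_adj : ∀ {x y}, H.Adj x y → rt x = rt y := by
    intro x y hxy
    exact congrArg Quot.out (SimpleGraph.ConnectedComponent.sound hxy.reachable)
  set d : V → ℕ := fun x => H.dist x (rt x) with hd
  have hne : ∀ {x y}, H.Adj x y → d x ≠ d y := by
    intro x y hxy
    have h1 : rt x = rt y := hrt_adj hxy
    have := forest_dist_ne hH hxy (hreach y)
    simpa [hd, h1] using this
  have key : ∀ {x x' y}, H.Adj x y → H.Adj x' y → d x < d y → d x' < d y → x = x' := by
    intro x x' y hxy hx'y hlt hlt'
    have h1 : rt x = rt y := hrt_adj hxy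
    have h1' : rt x' = rt y := hrt_adj hx'y
    refine forest_near_unique hH hxy hx'y (hreach y) ?_ ?_
    · simpa only [hd, h1] using hlt
    · simpa only [hd, h1'] using hlt'
  have hcard : (S ×ˢ (univ : Finset Bool)).card = 2 * S.card := by
    simp [Finset.card_product, Fintype.card_bool]; ring
  rw [← hcard]
  apply Finset.card_le_card_of_injOn
    (fun p => (if d p.1 < d p.2 then p.2 else p.1, decide (d p.1 < d p.2)))
  · rintro ⟨a, b⟩ hp
    simp only [Finset.mem_coe, Finset.mem_filter, Finset.mem_product] at hp
    obtain ⟨⟨ha, hb⟩, _⟩ := hp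
    simp only [Finset.mem_coe, Finset.mem_product, Finset.mem_univ, and_true]
    split <;> assumption
  · rintro ⟨a, b⟩ hp ⟨c, e⟩ hq hfeq
    simp only [Finset.mem_coe, Finset.mem_filter, Finset.mem_product] at hp hq
    obtain ⟨-, hab⟩ := hp
    obtain ⟨-, hce⟩ := hq
    simp only [Prod.mk.injEq, decide_eq_decide] at hfeq
    obtain ⟨h1, h2⟩ := hfeq
    by_cases hlt : d a < d b
    · have hlt' : d c < d e := h2.mp hlt
      rw [if_pos hlt] at h1
      rw [if_pos hlt'] at h1
      subst h1
      have : a = c := key hab hce hlt hlt'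
      simp [this]
    · have hlt' : ¬ d c < d e := fun h => hlt (h2.mpr h)
      rw [if_neg hlt] at h1
      rw [if_neg hlt'] at h1
      subst h1
      have hba : d b < d a := by
        have := hne hab
        omega
      have hea : d e < d a := by
        have := hne hce
        omega
      have : b = e := key hab.symm hce.symm hba hea
      simp [this]

lemma sum_deg_le [Fintype V] [DecidableEq V] {G : SimpleGraph V} [DecidableRel G.Adj]
    {α : ℕ} (hG : G.HasArboricityLE α) (S : Finset V) :
    ∑ v ∈ S, ((G.neighborFinset v) ∩ S).card ≤ 2 * α * S.card := by
  classical
  obtain ⟨f, hf, hforest⟩ := hG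
  set T : Finset (V × V) := (S ×ˢ S).filter fun p => G.Adj p.1 p.2 with hT
  have hsum : ∑ v ∈ S, ((G.neighborFinset v) ∩ S).card = T.card := by
    rw [Finset.card_eq_sum_card_fiberwise (f := Prod.fst) (t := S)
      (fun x hx => (Finset.mem_product.mp (Finset.mem_filter.mp hx).1).1)]
    apply Finset.sum_congr rfl
    intro u hu
    have : T.filter (fun p => p.1 = u) = {u} ×ˢ ((G.neighborFinset u) ∩ S) := by
      ext ⟨x, y⟩
      simp only [hT, Finset.mem_filter, Finset.mem_product, Finset.mem_singleton,
        Finset.mem_inter, SimpleGraph.mem_neighborFinset]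
      constructor
      · rintro ⟨⟨⟨hx, hy⟩, hadj⟩, rfl⟩
        exact ⟨rfl, hadj, hy⟩
      · rintro ⟨rfl, hadj, hy⟩
        exact ⟨⟨⟨hu, hy⟩, hadj⟩, rfl⟩
    rw [this, Finset.card_product, Finset.card_singleton, one_mul]
  rw [hsum]
  have hsub : T ⊆ (Finset.range α).biUnion (fun i =>
      (S ×ˢ S).filter fun p =>
        (SimpleGraph.fromEdgeSet {e | e ∈ G.edgeSet ∧ f e = i}).Adj p.1 p.2) := by
    rintro ⟨x, y⟩ hxy
    simp only [hT, Finset.mem_filter, Finset.mem_product] at hxy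
    obtain ⟨⟨hx, hy⟩, hadj⟩ := hxy
    have hmem : s(x, y) ∈ G.edgeSet := hadj
    refine Finset.mem_biUnion.mpr ⟨f s(x, y), Finset.mem_range.mpr (hf _ hmem), ?_⟩
    simp only [Finset.mem_filter, Finset.mem_product, SimpleGraph.fromEdgeSet_adj,
      Set.mem_setOf_eq]
    exact ⟨⟨hx, hy⟩, ⟨hmem, trivial⟩, hadj.ne⟩
  calc T.card ≤ ∑ i ∈ Finset.range α,
        ((S ×ˢ S).filter fun p =>
          (SimpleGraph.fromEdgeSet {e | e ∈ G.edgeSet ∧ f e = i}).Adj p.1 p.2).card :=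
        le_trans (Finset.card_le_card hsub) (Finset.card_biUnion_le)
    _ ≤ ∑ _i ∈ Finset.range α, 2 * S.card := by
        apply Finset.sum_le_sum
        intro i _
        exact forest_pairs_le (hforest i) S
    _ = 2 * α * S.card := by
        rw [Finset.sum_const, Finset.card_range]
        ring

lemma peel_step {V : Type} [Fintype V] [DecidableEq V] {G : SimpleGraph V} [DecidableRel G.Adj]
    {α : ℕ} (hα : 1 ≤ α) (hG : G.HasArboricityLE α) (t : ℕ) :
    3 * (peel G α (t + 1)).card ≤ 2 * (peel G α t).card := by
  set S := peel G α t with hS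
  set S' := peel G α (t + 1) with hS'
  have hS'def : S' = S.filter (fun v => 3 * α < ((G.neighborFinset v) ∩ S).card) := rfl
  have hsub : S' ⊆ S := hS'def ▸ Finset.filter_subset _ _
  have h1 : (3 * α + 1) * S'.card ≤ ∑ v ∈ S', ((G.neighborFinset v) ∩ S).card := by
    have hb : ∀ v ∈ S', 3 * α + 1 ≤ ((G.neighborFinset v) ∩ S).card := by
      intro v hv
      have := (Finset.mem_filter.mp (hS'def ▸ hv)).2
      omega
    calc (3 * α + 1) * S'.card = S'.card • (3 * α + 1) := by
          rw [smul_eq_mul, mul_comm]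
      _ ≤ ∑ v ∈ S', ((G.neighborFinset v) ∩ S).card :=
          Finset.card_nsmul_le_sum S' _ _ hb
  have h2 : ∑ v ∈ S', ((G.neighborFinset v) ∩ S).card
      ≤ ∑ v ∈ S, ((G.neighborFinset v) ∩ S).card :=
    Finset.sum_le_sum_of_subset hsub
  have h3 := sum_deg_le hG S
  have h4 : α * (3 * S'.card) ≤ α * (2 * S.card) := by nlinarith
  exact Nat.le_of_mul_le_mul_left h4 hα

end Aux

lemma peel_card_le {V : Type} [Fintype V] [DecidableEq V] {G : SimpleGraph V} [DecidableRel G.Adj]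
    {α : ℕ} (hα : 1 ≤ α) (hG : G.HasArboricityLE α) :
    ∀ t : ℕ, 3 ^ t * (peel G α t).card ≤ 2 ^ t * Fintype.card V := by
  intro t
  induction t with
  | zero => simp [peel, Finset.card_univ]
  | succ t ih =>
    calc 3 ^ (t + 1) * (peel G α (t + 1)).card
        = 3 ^ t * (3 * (peel G α (t + 1)).card) := by ring
      _ ≤ 3 ^ t * (2 * (peel G α t).card) :=
          Nat.mul_le_mul_left _ (peel_step hα hG t)
      _ = 2 * (3 ^ t * (peel G α t).card) := by ring
      _ ≤ 2 * (2 ^ t * Fintype.card V) := Nat.mul_le_mul_left _ ih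
      _ = 2 ^ (t + 1) * Fintype.card V := by ring

/-- If `G` has arboricity at most `α`, the peeling process (deactivating every
vertex with at most `3α` active neighbors) finishes, with all vertices
inactive, within `O(log n)` rounds. -/
theorem peel_empty_of_arboricity :
    ∀ α : ℕ, 1 ≤ α → ∃ C : ℕ, 0 < C ∧
      ∀ (V : Type) [Fintype V] [DecidableEq V] (G : SimpleGraph V)
        [DecidableRel G.Adj],
        G.HasArboricityLE α →
        ∀ t : ℕ, C * (Nat.log 2 (Fintype.card V) + 1) ≤ t → peel G α t = ∅ := by
  intro α hα
  refine ⟨2, by norm_num, ?_⟩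
  intro V _ _ G _ hG t ht
  set n := Fintype.card V with hn
  set L := Nat.log 2 n + 1 with hL
  have hkey : ∀ s : ℕ, 2 * L ≤ s → 2 ^ s * n < 3 ^ s := by
    intro s hs
    induction s, hs using Nat.le_induction with
    | base =>
      have hnlt : n < 2 ^ L := Nat.lt_pow_succ_log_self (by norm_num) n
      calc 2 ^ (2 * L) * n < 2 ^ (2 * L) * 2 ^ L := by
            exact (Nat.mul_lt_mul_left (by positivity)).mpr hnlt
        _ = 8 ^ L := by rw [← pow_add]; rw [show 2 * L + L = 3 * L by ring, pow_mul]; norm_num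
        _ ≤ 9 ^ L := Nat.pow_le_pow_left (by norm_num) L
        _ = 3 ^ (2 * L) := by rw [pow_mul]; norm_num
    | succ s hs ih =>
      calc 2 ^ (s + 1) * n = 2 * (2 ^ s * n) := by ring
        _ < 2 * 3 ^ s := by omega
        _ ≤ 3 ^ (s + 1) := by rw [pow_succ]; omega
  have h1 := peel_card_le hα hG t
  rw [← hn] at h1
  have h2 := hkey t ht
  have h3 : 3 ^ t * (peel G α t).card < 3 ^ t * 1 := by
    rw [mul_one]; omega
  have h4 : (peel G α t).card < 1 := Nat.lt_of_mul_lt_mul_left h3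
  exact Finset.card_eq_zero.mp (by omega)
end

section
/- Let G be a graph with arboricity at most α on which the peeling process (deactivating vertices with at most 3α active neighbors) is run to completion. Orient each edge {u,v} from the vertex deactivated earlier to the one deactivated later (breaking ties among simultaneously deactivated vertices by orienting from smaller to larger id). Then every vertex has out-degree at most 3α and the orientation is acyclic, yielding a decomposition of the edges of G into at most 3α forests. -/
section PeelAux

open SimpleGraph

variable {V : Type} [Fintype V] [LinearOrder V]

/-- The "deactivated earlier" strict order used to orient edges. -/
def plt (d : V → ℕ) (a b : V) : Prop := d a < d b ∨ (d a = d b ∧ a < b)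

instance pltDec (d : V → ℕ) : DecidableRel (plt d) := fun a b => by
  unfold plt; infer_instance

lemma plt_iff_lex (d : V → ℕ) (a b : V) :
    plt d a b ↔ (toLex (d a, a) : ℕ ×ₗ V) < toLex (d b, b) := by
  rw [Prod.Lex.lt_iff]; rfl

lemma plt_irrefl (d : V → ℕ) (a : V) : ¬ plt d a a := by
  rw [plt_iff_lex]; exact lt_irrefl _

lemma plt_trans {d : V → ℕ} {a b c : V} (h1 : plt d a b) (h2 : plt d b c) :
    plt d a c := by
  rw [plt_iff_lex] at *; exact h1.trans h2

lemma plt_total {d : V → ℕ} {a b : V} (h : a ≠ b) : plt d a b ∨ plt d b a := by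
  rw [plt_iff_lex, plt_iff_lex]
  rcases lt_trichotomy (toLex (d a, a) : ℕ ×ₗ V) (toLex (d b, b)) with h' | h' | h'
  · exact Or.inl h'
  · exact absurd (congrArg (fun x => (ofLex x).2) h') h
  · exact Or.inr h'

lemma plt_asymm {d : V → ℕ} {a b : V} (h1 : plt d a b) (h2 : plt d b a) : False :=
  plt_irrefl d a (plt_trans h1 h2)

/-- A graph in which every vertex has at most one neighbor that is larger
(in the `plt` order) is acyclic. -/
lemma isAcyclic_of_unique (d : V → ℕ) (H : SimpleGraph V)
    (huniq : ∀ u v w, H.Adj u v → H.Adj u w → plt d u v → plt d u w → v = w) :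
    H.IsAcyclic := by
  intro v c hc
  obtain ⟨u, hu, hmin⟩ := Finset.exists_min_image c.support.toFinset
      (fun x => (toLex (d x, x) : ℕ ×ₗ V)) ⟨v, by simp⟩
  rw [List.mem_toFinset] at hu
  have hmin' : ∀ x ∈ c.support, x ≠ u → plt d u x := by
    intro x hx hxu
    rcases plt_total (d := d) (Ne.symm hxu) with h' | h'
    · exact h'
    · exact absurd ((plt_iff_lex d x u).mp h')
        (not_lt.mpr (hmin x (List.mem_toFinset.mpr hx)))
  set c' := c.rotate u hu with hc'def
  have hc'c : c'.IsCycle := hc.rotate hu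
  have htail : List.Perm c'.support.tail c.support.tail := (Walk.support_rotate c u hu).perm
  obtain ⟨x, hadj, p, hpe⟩ := Walk.not_nil_iff.mp hc'c.not_nil
  have hcyc : (Walk.cons hadj p).IsCycle := hpe ▸ hc'c
  rw [Walk.cons_isCycle_iff] at hcyc
  obtain ⟨hpath, hedge⟩ := hcyc
  have hpnil : ¬ p.Nil := Walk.not_nil_of_ne hadj.ne.symm
  have hrnil : ¬ p.reverse.Nil := by
    rw [Walk.nil_iff_length_eq, Walk.length_reverse,
      ← Walk.nil_iff_length_eq]
    exact hpnil
  obtain ⟨y, hadjy, q, hqe⟩ := Walk.not_nil_iff.mp hrnil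
  -- x and y are both in the support of c
  have hxmem : x ∈ c.support := by
    have : x ∈ c'.support.tail := by
      rw [hpe, Walk.support_cons]
      exact p.start_mem_support
    exact List.mem_of_mem_tail (htail.mem_iff.mp this)
  have hymem : y ∈ c.support := by
    have hy1 : y ∈ p.reverse.support := by
      rw [hqe, Walk.support_cons]
      exact List.mem_cons_of_mem _ q.start_mem_support
    have hy2 : y ∈ p.support := by
      rwa [Walk.support_reverse, List.mem_reverse] at hy1
    have : y ∈ c'.support.tail := by
      rw [hpe, Walk.support_cons]
      exact hy2
    exact List.mem_of_mem_tail (htail.mem_iff.mp this)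
  have hyx : y ≠ x := by
    intro h; subst h
    apply hedge
    have : s(u, y) ∈ p.reverse.edges := by
      rw [hqe, Walk.edges_cons]; exact List.mem_cons_self
    rwa [Walk.edges_reverse, List.mem_reverse] at this
  have hpx : plt d u x := hmin' x hxmem hadj.ne.symm
  have hpy : plt d u y := hmin' y hymem hadjy.ne.symm
  exact hyx (huniq u y x hadjy hadj hpy hpx)

variable (G : SimpleGraph V) [DecidableRel G.Adj] (d : V → ℕ)

/-- Out-neighbors of `u` under the orientation. -/
def outs (u : V) : Finset V :=
  (G.neighborFinset u).filter (fun v => d u < d v ∨ (d u = d v ∧ u < v))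

lemma mem_outs {u v : V} : v ∈ outs G d u ↔ G.Adj u v ∧ plt d u v := by
  simp [outs, plt, Finset.mem_filter, SimpleGraph.mem_neighborFinset]

/-- Counts out-neighbors of `u` smaller than `t`. -/
def cnt (u t : V) : ℕ := ((outs G d u).filter (fun w => plt d w t)).card

lemma cnt_lt_card {u v : V} (h : G.Adj u v) (hp : plt d u v) :
    cnt G d u v < (outs G d u).card := by
  apply Finset.card_lt_card
  rw [Finset.ssubset_iff_of_subset (Finset.filter_subset _ _)]
  exact ⟨v, (mem_outs G d).mpr ⟨h, hp⟩, by simp [plt_irrefl]⟩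

lemma cnt_strict {u v w : V} (h : G.Adj u v) (hp : plt d u v) (hvw : plt d v w) :
    cnt G d u v < cnt G d u w := by
  apply Finset.card_lt_card
  rw [Finset.ssubset_iff_of_subset]
  · refine ⟨v, ?_, by simp [plt_irrefl]⟩
    exact Finset.mem_filter.mpr ⟨(mem_outs G d).mpr ⟨h, hp⟩, hvw⟩
  · intro z hz
    rw [Finset.mem_filter] at hz ⊢
    exact ⟨hz.1, plt_trans hz.2 hvw⟩

lemma cnt_inj {u v w : V} (hv : G.Adj u v) (hw : G.Adj u w)
    (hpv : plt d u v) (hpw : plt d u w) (heq : cnt G d u v = cnt G d u w) :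
    v = w := by
  by_contra hne
  rcases plt_total (d := d) hne with h' | h'
  · exact absurd heq (Nat.ne_of_lt (cnt_strict G d hv hpv h'))
  · exact absurd heq.symm (Nat.ne_of_lt (cnt_strict G d hw hpw h'))

/-- The forest coloring function. -/
def fcol : Sym2 V → ℕ :=
  Sym2.lift ⟨fun a b => if plt d a b then cnt G d a b else cnt G d b a, by
    intro a b
    dsimp only
    by_cases h1 : plt d a b
    · rw [if_pos h1, if_neg (fun h2 => plt_asymm h1 h2)]
    · by_cases h2 : plt d b a
      · rw [if_neg h1, if_pos h2]
      · have hab : a = b := by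
          by_contra hne
          rcases plt_total (d := d) hne with h | h
          · exact h1 h
          · exact h2 h
        subst hab; rw [if_neg h1]⟩

lemma fcol_mk {a b : V} (h : plt d a b) : fcol G d s(a, b) = cnt G d a b := by
  simp only [fcol, Sym2.lift_mk]
  rw [if_pos h]

end PeelAux

/-- Orienting each edge from the endpoint deactivated earlier in the peeling
process to the one deactivated later (ties broken by id) yields an acyclic
orientation with out-degree at most `3α`, and hence a decomposition of the
edges of `G` into at most `3α` forests. Here `d v` is the round in which `v`
becomes inactive. -/
theorem peel_orientation {V : Type} [Fintype V] [LinearOrder V]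
    (G : SimpleGraph V) [DecidableRel G.Adj] (α : ℕ) (hα : 1 ≤ α)
    (h : G.HasArboricityLE α)
    (d : V → ℕ)
    (hd : ∀ v, v ∉ peel G α (d v) ∧ ∀ j, j < d v → v ∈ peel G α j) :
    (∀ u, ((G.neighborFinset u).filter
        (fun v => d u < d v ∨ (d u = d v ∧ u < v))).card ≤ 3 * α) ∧
    (∀ v, ¬ Relation.TransGen
        (fun a b => G.Adj a b ∧ (d a < d b ∨ (d a = d b ∧ a < b))) v v) ∧
    G.HasArboricityLE (3 * α) := by
  have part1 : ∀ u, ((G.neighborFinset u).filter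
      (fun v => d u < d v ∨ (d u = d v ∧ u < v))).card ≤ 3 * α := by
    intro u
    obtain ⟨hu1, hu2⟩ := hd u
    obtain ⟨n, hn⟩ : ∃ n, d u = n + 1 := by
      cases hdu : d u with
      | zero =>
        rw [hdu] at hu1
        exact absurd (Finset.mem_univ u) hu1
      | succ n => exact ⟨n, rfl⟩
    have hun : u ∈ peel G α n := hu2 n (by omega)
    have hcard : ((G.neighborFinset u) ∩ peel G α n).card ≤ 3 * α := by
      by_contra hlt
      push_neg at hlt
      apply hn ▸ hu1
      show u ∈ (peel G α n).filter _
      exact Finset.mem_filter.mpr ⟨hun, hlt⟩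
    refine le_trans (Finset.card_le_card ?_) hcard
    intro v hv
    rw [Finset.mem_filter] at hv
    rw [Finset.mem_inter]
    refine ⟨hv.1, (hd v).2 n ?_⟩
    rcases hv.2 with h' | ⟨h', -⟩ <;> omega
  have outs_card : ∀ u, (outs G d u).card ≤ 3 * α := part1
  refine ⟨part1, ?_, ?_⟩
  · intro v hvv
    have h2 : Relation.TransGen (plt d) v v :=
      Relation.TransGen.mono (fun a b hab => (hab.2 : plt d a b)) v v hvv
    have h3 : ∀ w, Relation.TransGen (plt d) v w → plt d v w := by
      intro w hw
      induction hw with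
      | single hvb => exact hvb
      | tail _ hbc ih => exact plt_trans ih hbc
    exact plt_irrefl d v (h3 v h2)
  · refine ⟨fcol G d, ?_, ?_⟩
    · have aux : ∀ a b : V, G.Adj a b → plt d a b → fcol G d s(a, b) < 3 * α := by
        intro a b hab hp
        rw [fcol_mk G d hp]
        exact lt_of_lt_of_le (cnt_lt_card G d hab hp) (outs_card a)
      intro e he
      induction e with
      | h a b =>
        rw [SimpleGraph.mem_edgeSet] at he
        rcases plt_total (d := d) he.ne with hp | hp
        · exact aux a b he hp
        · rw [Sym2.eq_swap]
          exact aux b a he.symm hp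
    · intro i
      apply isAcyclic_of_unique d
      intro u v w huv huw hpv hpw
      rw [SimpleGraph.fromEdgeSet_adj] at huv huw
      obtain ⟨⟨hev, hfv⟩, -⟩ := huv
      obtain ⟨⟨hew, hfw⟩, -⟩ := huw
      rw [SimpleGraph.mem_edgeSet] at hev hew
      rw [fcol_mk G d hpv] at hfv
      rw [fcol_mk G d hpw] at hfw
      exact cnt_inj G d hev hew hpv hpw (hfv.trans hfw.symm)
end

section
/- If a graph G on m edges is ε-far from being planar, and its vertex set is partitioned into parts P¹,...,P^k such that the number of edges between different parts is at most εm/2, then there exists a part P^j such that the induced subgraph G^j = G[P^j] is (ε/2)-far from being planar, i.e., more than (ε/2)·m(G^j) edges must be removed from G^j to make it planar, where m(G^j) is the number of edges of G^j. -/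
/-- `H` is a minor of `G`: there is a family of nonempty, pairwise disjoint,
connected branch sets in `G`, one for each vertex of `H`, such that adjacent
vertices of `H` have an edge of `G` between their branch sets. -/
def SimpleGraph.IsMinorOf {W V : Type*} (H : SimpleGraph W) (G : SimpleGraph V) : Prop :=
  ∃ f : W → Set V,
    (∀ w, (f w).Nonempty) ∧
    (∀ w, (G.induce (f w)).Connected) ∧
    (Pairwise fun w w' => Disjoint (f w) (f w')) ∧
    (∀ ⦃w w'⦄, H.Adj w w' → ∃ u ∈ f w, ∃ v ∈ f w', G.Adj u v)

/-- A graph is planar iff it has neither a `K₅` nor a `K₃,₃` minor (Wagner). -/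
def SimpleGraph.IsPlanar {V : Type*} (G : SimpleGraph V) : Prop :=
  ¬ (completeGraph (Fin 5)).IsMinorOf G ∧
  ¬ (completeBipartiteGraph (Fin 3) (Fin 3)).IsMinorOf G

/-- `G` is `ε`-far from being planar: more than `ε·m` edges must be removed to
obtain a planar graph, where `m` is the number of edges of `G`. -/
def SimpleGraph.FarFromPlanar {V : Type*} (G : SimpleGraph V) (ε : ℝ) : Prop :=
  ∀ H : SimpleGraph V, H ≤ G → H.IsPlanar →
    ε * G.edgeSet.ncard < (G.edgeSet.ncard : ℝ) - H.edgeSet.ncard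

lemma aux_edgeSet_map {α β : Type*} (f : α ↪ β) (K : SimpleGraph α) :
    (K.map f).edgeSet = Sym2.map f '' K.edgeSet := by
  ext e
  induction e using Sym2.ind with
  | _ u v =>
  simp only [Set.mem_image, SimpleGraph.mem_edgeSet, SimpleGraph.map_adj]
  constructor
  · rintro ⟨u', v', h, rfl, rfl⟩
    exact ⟨s(u', v'), h, rfl⟩
  · rintro ⟨e', he, hmap⟩
    induction e' using Sym2.ind with
    | _ a b =>
    rw [Sym2.map_pair_eq] at hmap
    rcases Sym2.eq_iff.mp hmap with ⟨ha, hb⟩ | ⟨ha, hb⟩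
    · exact ⟨a, b, he, ha, hb⟩
    · exact ⟨b, a, he.symm, hb, ha⟩

lemma aux_sum_ncard_le {α : Type*} [Fintype α] {k : ℕ} (E : Fin k → Set α)
    (hd : ∀ i j, i ≠ j → Disjoint (E i) (E j)) {T : Set α} (hsub : ∀ j, E j ⊆ T) :
    ∑ j, (E j).ncard ≤ T.ncard := by
  classical
  have hfin : ∀ j, (E j).Finite := fun j => Set.toFinite _
  have hT : T.Finite := Set.toFinite _
  have h1 : ∑ j, (E j).ncard = (Finset.univ.biUnion fun j => (hfin j).toFinset).card := by
    rw [Finset.card_biUnion]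
    · exact Finset.sum_congr rfl fun j _ => Set.ncard_eq_toFinset_card _ (hfin j)
    · intro i _ j _ hij
      simp only [Finset.disjoint_left, Set.Finite.mem_toFinset]
      exact fun a ha ha' => Set.disjoint_left.mp (hd i j hij) ha ha'
  rw [h1, Set.ncard_eq_toFinset_card _ hT]
  apply Finset.card_le_card
  intro x hx
  simp only [Finset.mem_biUnion, Set.Finite.mem_toFinset] at hx ⊢
  obtain ⟨j, _, hj⟩ := hx
  exact hsub j hj

lemma aux_ncard_iUnion_le {α : Type*} [Fintype α] {k : ℕ} (E : Fin k → Set α) :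
    (⋃ j, E j).ncard ≤ ∑ j, (E j).ncard := by
  classical
  have hfin : ∀ j, (E j).Finite := fun j => Set.toFinite _
  have hU : (⋃ j, E j).Finite := Set.toFinite _
  rw [Set.ncard_eq_toFinset_card _ hU]
  calc hU.toFinset.card ≤ (Finset.univ.biUnion fun j => (hfin j).toFinset).card := by
        apply Finset.card_le_card
        intro x hx
        simp only [Set.Finite.mem_toFinset, Set.mem_iUnion] at hx
        obtain ⟨j, hj⟩ := hx
        simp only [Finset.mem_biUnion, Set.Finite.mem_toFinset]
        exact ⟨j, Finset.mem_univ j, hj⟩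
    _ ≤ ∑ j, ((hfin j).toFinset).card := Finset.card_biUnion_le
    _ = ∑ j, (E j).ncard := by
        exact Finset.sum_congr rfl fun j _ => (Set.ncard_eq_toFinset_card _ (hfin j)).symm

lemma aux_cg_connected : (SimpleGraph.completeGraph (Fin 5)).Connected := SimpleGraph.connected_top

lemma aux_cbg_connected : (completeBipartiteGraph (Fin 3) (Fin 3)).Connected := by
  rw [SimpleGraph.connected_iff]
  refine ⟨?_, ⟨Sum.inl 0⟩⟩
  have h : ∀ v, (completeBipartiteGraph (Fin 3) (Fin 3)).Reachable v (Sum.inr 0) := by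
    intro v
    cases v with
    | inl a => exact SimpleGraph.Adj.reachable (by simp)
    | inr b =>
      exact ((SimpleGraph.Adj.reachable (by simp :
        (completeBipartiteGraph (Fin 3) (Fin 3)).Adj (Sum.inr b) (Sum.inl 0))).trans
        (SimpleGraph.Adj.reachable (by simp)))
  intro u v
  exact (h u).trans (h v).symm


/-- If `G` is `ε`-far from planar and its vertex set is partitioned into parts
with at most `εm/2` edges between different parts, then the subgraph induced by
some part is `(ε/2)`-far from planar. -/
theorem exists_far_part {V : Type} [Fintype V] (G : SimpleGraph V)
    (ε : ℝ) (hε : 0 < ε) (hε1 : ε < 1)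
    (k : ℕ) (P : V → Fin k)
    (hcut : ({e ∈ G.edgeSet | ∃ u v, e = s(u, v) ∧ P u ≠ P v}.ncard : ℝ) ≤
      ε * G.edgeSet.ncard / 2)
    (hfar : G.FarFromPlanar ε) :
    ∃ j : Fin k, (G.induce {v | P v = j}).FarFromPlanar (ε / 2) := by
  classical
  by_contra hno
  push_neg at hno
  set S : Fin k → Set V := fun j => {v | P v = j} with hSdef
  unfold SimpleGraph.FarFromPlanar at hno
  push_neg at hno
  choose Hc hle hpl hcnt using hno
  -- lifted graphs
  set M : Fin k → SimpleGraph V :=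
    (fun j => (Hc j).map (Function.Embedding.subtype fun v => v ∈ S j)) with hMdef
  set H : SimpleGraph V := ⨆ j, M j with hHdef
  have hMadj : ∀ (j : Fin k) (u v : V), (M j).Adj u v ↔
      ∃ (hu : P u = j) (hv : P v = j), (Hc j).Adj ⟨u, hu⟩ ⟨v, hv⟩ := by
    intro j u v
    rw [hMdef]
    simp only [SimpleGraph.map_adj]
    constructor
    · rintro ⟨u', v', h, rfl, rfl⟩
      exact ⟨u'.2, v'.2, h⟩
    · rintro ⟨hu, hv, h⟩
      exact ⟨⟨u, hu⟩, ⟨v, hv⟩, h, rfl, rfl⟩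
  have hHadj : ∀ u v, H.Adj u v ↔ ∃ j, (M j).Adj u v := fun u v => SimpleGraph.iSup_adj
  have hHpart : ∀ u v, H.Adj u v → P u = P v := by
    intro u v h
    obtain ⟨j, hj⟩ := (hHadj u v).mp h
    obtain ⟨hu, hv, -⟩ := (hMadj j u v).mp hj
    rw [hu, hv]
  have hHle : H ≤ G := by
    refine iSup_le fun j => ?_
    intro u v h
    obtain ⟨hu, hv, ha⟩ := (hMadj j u v).mp h
    exact hle j ha
  have hHrestr : ∀ (j : Fin k) (u v : V) (hu : P u = j) (hv : P v = j),
      H.Adj u v ↔ (Hc j).Adj ⟨u, hu⟩ ⟨v, hv⟩ := by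
    intro j u v hu hv
    rw [hHadj]
    constructor
    · rintro ⟨j', hj'⟩
      obtain ⟨hu', hv', ha⟩ := (hMadj j' u v).mp hj'
      obtain rfl : j' = j := hu'.symm.trans hu
      exact ha
    · intro ha
      exact ⟨j, (hMadj j u v).mpr ⟨hu, hv, ha⟩⟩
  -- connected minors of H live in a single part
  have key : ∀ {W : Type} (Kg : SimpleGraph W), Kg.Connected →
      Kg.IsMinorOf H → ∃ j, Kg.IsMinorOf (Hc j) := by
    rintro W Kg hKconn ⟨f, hne, hconn, hdisj, hadjm⟩
    have hwalk : ∀ (A : Set V) (a b : ↑A), (H.induce A).Reachable a b → P a.1 = P b.1 := by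
      intro A a b hr
      obtain ⟨w⟩ := hr
      induction w with
      | nil => rfl
      | cons h p ih => exact (hHpart _ _ h).trans ih
    have hpart : ∀ w : W, ∀ x ∈ f w, ∀ y ∈ f w, P x = P y := by
      intro w x hx y hy
      exact hwalk _ ⟨x, hx⟩ ⟨y, hy⟩ ((hconn w).preconnected _ _)
    obtain ⟨w0⟩ := hKconn.nonempty
    obtain ⟨x0, hx0⟩ := hne w0
    set j : Fin k := P x0 with hjdef
    have hjconst : ∀ w : W, ∀ x ∈ f w, P x = j := by
      have hadj' : ∀ w w', Kg.Adj w w' →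
          (∀ x ∈ f w, P x = j) → (∀ x ∈ f w', P x = j) := by
        intro w w' h hw x hx
        obtain ⟨u, hu, v, hv, huv⟩ := hadjm h
        have h1 : P v = j := (hHpart u v huv).symm.trans (hw u hu)
        exact (hpart w' x hx v hv).trans h1
      have step : ∀ (w w' : W) (p : Kg.Walk w w'),
          (∀ x ∈ f w, P x = j) → (∀ x ∈ f w', P x = j) := by
        intro w w' p
        induction p with
        | nil => exact id
        | cons h p ih => exact fun hw => ih (hadj' _ _ h hw)
      intro w
      obtain ⟨p⟩ := hKconn.preconnected w0 w
      exact step w0 w p (fun x hx => hpart w0 x hx x0 hx0)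
    refine ⟨j, fun w => {x : ↑(S j) | x.1 ∈ f w}, ?_, ?_, ?_, ?_⟩
    · intro w
      obtain ⟨x, hx⟩ := hne w
      exact ⟨⟨x, hjconst w x hx⟩, hx⟩
    · intro w
      have e : (H.induce (f w)) ≃g ((Hc j).induce {x : ↑(S j) | x.1 ∈ f w}) := by
        refine ⟨⟨fun x => ⟨⟨x.1, hjconst w x.1 x.2⟩, x.2⟩, fun y => ⟨y.1.1, y.2⟩,
          fun x => rfl, fun y => rfl⟩, ?_⟩
        intro x y
        exact (hHrestr j x.1 y.1 (hjconst w x.1 x.2) (hjconst w y.1 y.2)).symm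
      exact e.connected_iff.mp (hconn w)
    · intro w w' hne'
      rw [Set.disjoint_left]
      rintro ⟨x, hxS⟩ hx hx'
      exact Set.disjoint_left.mp (hdisj hne') hx hx'
    · intro w w' h
      obtain ⟨u, hu, v, hv, huv⟩ := hadjm h
      exact ⟨⟨u, hjconst w u hu⟩, hu, ⟨v, hjconst w' v hv⟩, hv,
        (hHrestr j u v _ _).mp huv⟩
  have hHpl : H.IsPlanar := by
    constructor
    · intro hm
      obtain ⟨j, hj⟩ := key _ aux_cg_connected hm
      exact (hpl j).1 hj
    · intro hm
      obtain ⟨j, hj⟩ := key _ aux_cbg_connected hm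
      exact (hpl j).2 hj
  -- counting
  set C : Set (Sym2 V) := {e ∈ G.edgeSet | ∃ u v, e = s(u, v) ∧ P u ≠ P v} with hCdef
  set Wst : Fin k → Set (Sym2 V) := fun j =>
    Sym2.map (Function.Embedding.subtype fun v => v ∈ S j) '' (G.induce (S j)).edgeSet
    with hWdef
  have hsym2inj : ∀ j : Fin k, Function.Injective
      (Sym2.map (Function.Embedding.subtype fun v => v ∈ S j)) :=
    fun j => Sym2.map.injective (Function.Embedding.subtype _).injective
  have hWcard : ∀ j, (Wst j).ncard = (G.induce (S j)).edgeSet.ncard :=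
    fun j => Set.ncard_image_of_injective _ (hsym2inj j)
  have hWpart : ∀ j e, e ∈ Wst j → ∀ x ∈ e, P x = j := by
    rintro j e ⟨e', he', rfl⟩ x hx
    obtain ⟨a, ha, rfl⟩ := Sym2.mem_map.mp hx
    exact a.2
  have hMedge : ∀ j, (M j).edgeSet =
      Sym2.map (Function.Embedding.subtype fun v => v ∈ S j) '' (Hc j).edgeSet :=
    fun j => aux_edgeSet_map _ _
  have hMcard : ∀ j, (M j).edgeSet.ncard = (Hc j).edgeSet.ncard := by
    intro j
    rw [hMedge j]
    exact Set.ncard_image_of_injective _ (hsym2inj j)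
  have hMpart : ∀ j e, e ∈ (M j).edgeSet → ∀ x ∈ e, P x = j := by
    intro j e he x hx
    rw [hMedge j] at he
    obtain ⟨e', he', rfl⟩ := he
    obtain ⟨a, ha, rfl⟩ := Sym2.mem_map.mp hx
    exact a.2
  have hWdisj : ∀ i j : Fin k, i ≠ j → Disjoint (Wst i) (Wst j) := by
    intro i j hij
    rw [Set.disjoint_left]
    intro e hei hej
    induction e using Sym2.ind with
    | _ u v =>
    exact hij ((hWpart i _ hei u (Sym2.mem_mk_left u v)).symm.trans
      (hWpart j _ hej u (Sym2.mem_mk_left u v)))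
  have hMdisj : ∀ i j : Fin k, i ≠ j → Disjoint (M i).edgeSet (M j).edgeSet := by
    intro i j hij
    rw [Set.disjoint_left]
    intro e hei hej
    induction e using Sym2.ind with
    | _ u v =>
    exact hij ((hMpart i _ hei u (Sym2.mem_mk_left u v)).symm.trans
      (hMpart j _ hej u (Sym2.mem_mk_left u v)))
  have hWG : ∀ j, Wst j ⊆ G.edgeSet := by
    intro j e he
    obtain ⟨e', he', rfl⟩ := he
    revert he'
    refine Sym2.ind (fun a b => ?_) e'
    intro he'
    rw [Sym2.map_pair_eq]
    exact he'
  have hMH : ∀ j, (M j).edgeSet ⊆ H.edgeSet :=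
    fun j => SimpleGraph.edgeSet_mono (le_iSup M j)
  have hcover : G.edgeSet ⊆ C ∪ ⋃ j, Wst j := by
    intro e
    induction e using Sym2.ind with
    | _ u v =>
    intro he
    by_cases h : P u = P v
    · right
      refine Set.mem_iUnion.mpr ⟨P v, ?_⟩
      refine ⟨s(⟨u, h⟩, ⟨v, rfl⟩), he, ?_⟩
      rw [Sym2.map_pair_eq]
      rfl
    · left
      exact ⟨he, u, v, rfl, h⟩
  -- numeric bounds
  have h1 : G.edgeSet.ncard ≤ C.ncard + (⋃ j, Wst j).ncard := by
    calc G.edgeSet.ncard ≤ (C ∪ ⋃ j, Wst j).ncard :=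
          Set.ncard_le_ncard hcover (Set.toFinite _)
      _ ≤ C.ncard + (⋃ j, Wst j).ncard := Set.ncard_union_le _ _
  have h2 : (⋃ j, Wst j).ncard ≤ ∑ j, (Wst j).ncard := aux_ncard_iUnion_le _
  have h4 : ∑ j, (Wst j).ncard ≤ G.edgeSet.ncard :=
    aux_sum_ncard_le _ hWdisj hWG
  have h5 : ∑ j, (M j).edgeSet.ncard ≤ H.edgeSet.ncard :=
    aux_sum_ncard_le _ hMdisj hMH
  have hf := hfar H hHle hHpl
  -- real arithmetic
  have hsumW : (↑(∑ j, (Wst j).ncard) : ℝ) = ∑ j, ((G.induce (S j)).edgeSet.ncard : ℝ) := by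
    push_cast
    exact Finset.sum_congr rfl fun j _ => by rw [hWcard j]
  have hsumM : (↑(∑ j, (M j).edgeSet.ncard) : ℝ) = ∑ j, ((Hc j).edgeSet.ncard : ℝ) := by
    push_cast
    exact Finset.sum_congr rfl fun j _ => by rw [hMcard j]
  have h1R : (G.edgeSet.ncard : ℝ) ≤ C.ncard + ∑ j, ((G.induce (S j)).edgeSet.ncard : ℝ) := by
    rw [← hsumW]
    exact_mod_cast le_trans h1 (by omega)
  have h4R : ∑ j, ((G.induce (S j)).edgeSet.ncard : ℝ) ≤ (G.edgeSet.ncard : ℝ) := by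
    rw [← hsumW]; exact_mod_cast h4
  have h5R : ∑ j, ((Hc j).edgeSet.ncard : ℝ) ≤ (H.edgeSet.ncard : ℝ) := by
    rw [← hsumM]; exact_mod_cast h5
  have hcntS : ∑ j, ((G.induce (S j)).edgeSet.ncard : ℝ) - ∑ j, ((Hc j).edgeSet.ncard : ℝ)
      ≤ ε / 2 * ∑ j, ((G.induce (S j)).edgeSet.ncard : ℝ) := by
    rw [← Finset.sum_sub_distrib, Finset.mul_sum]
    exact Finset.sum_le_sum fun j _ => hcnt j
  have hmul : ε / 2 * ∑ j, ((G.induce (S j)).edgeSet.ncard : ℝ) ≤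
      ε / 2 * (G.edgeSet.ncard : ℝ) := by
    apply mul_le_mul_of_nonneg_left h4R (by linarith)
  linarith
end

section
/- Let G be a weighted graph of arboricity at most α, and suppose each vertex v independently draws one incident edge (u,v) with probability w(u,v)/w(v), where w(v) is the total weight of edges incident to v, repeats this s = Θ(log(1/δ)) times, and keeps the maximum-weight drawn edge. Then with probability at least 1 - δ, the total weight of the edges kept (over all vertices) is at least w(G)/(16α). -/
open MeasureTheory

/-- The distribution of a single weighted draw at vertex `v`: an incident edge
`(v,u)` is drawn with probability proportional to its weight. -/
noncomputable def drawM {V : Type} [Fintype V] [DecidableEq V] [MeasurableSpace V]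
    (G : SimpleGraph V) [DecidableRel G.Adj] (w : Sym2 V → ℝ) (v : V) :
    Measure V :=
  ∑ u ∈ G.neighborFinset v,
    (ENNReal.ofReal (w s(v, u) / ∑ x ∈ G.neighborFinset v, w s(v, x))) •
      Measure.dirac u

instance drawM_finite {V : Type} [Fintype V] [DecidableEq V] [MeasurableSpace V]
    (G : SimpleGraph V) [DecidableRel G.Adj] (w : Sym2 V → ℝ) (v : V) :
    IsFiniteMeasure (drawM G w v) := by
  constructor
  simp only [drawM, Measure.finset_sum_apply, Measure.smul_apply, smul_eq_mul,
    measure_univ, mul_one]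
  exact ENNReal.sum_lt_top.mpr fun _ _ => ENNReal.ofReal_lt_top

/-- The product measure of `s` independent weighted draws at every vertex. -/
noncomputable def drawSpace {V : Type} [Fintype V] [DecidableEq V]
    [MeasurableSpace V] (G : SimpleGraph V) [DecidableRel G.Adj]
    (w : Sym2 V → ℝ) (s : ℕ) : Measure (Fin s × V → V) :=
  Measure.pi fun i => drawM G w i.2

open scoped ENNReal

section Aux

private lemma forest_no_two_parents {V : Type} {H : SimpleGraph V} (hH : H.IsAcyclic)
    {r z u u' : V} (hu : H.Adj z u) (hu' : H.Adj z u')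
    (hru : H.Reachable u r) (hru' : H.Reachable u' r)
    (hdu : H.dist u r ≤ H.dist z r) (hdu' : H.dist u' r ≤ H.dist z r) :
    u = u' := by
  classical
  obtain ⟨p, hp, hplen⟩ := hru.exists_path_of_dist
  obtain ⟨p', hp', hplen'⟩ := hru'.exists_path_of_dist
  have hz : ∀ {x : V}, H.Adj z x → ∀ (q : H.Walk x r), q.IsPath → q.length = H.dist x r →
      H.dist x r ≤ H.dist z r → z ∉ q.support := by
    intro x hx q hq hlen hle hzq
    have h1 : H.dist z r ≤ (q.dropUntil z hzq).length := SimpleGraph.dist_le _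
    have h2 : (q.takeUntil z hzq).length + (q.dropUntil z hzq).length = q.length := by
      rw [← SimpleGraph.Walk.length_append, SimpleGraph.Walk.take_spec]
    have h3 : (q.takeUntil z hzq).length = 0 := by omega
    exact hx.ne (SimpleGraph.Walk.eq_of_length_eq_zero h3).symm
  have hP1 : (SimpleGraph.Walk.cons hu p).IsPath :=
    (SimpleGraph.Walk.cons_isPath_iff hu p).2 ⟨hp, hz hu p hp hplen hdu⟩
  have hP2 : (SimpleGraph.Walk.cons hu' p').IsPath :=
    (SimpleGraph.Walk.cons_isPath_iff hu' p').2 ⟨hp', hz hu' p' hp' hplen' hdu'⟩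
  have heq := hH.path_unique ⟨SimpleGraph.Walk.cons hu p, hP1⟩ ⟨SimpleGraph.Walk.cons hu' p', hP2⟩
  have hval : SimpleGraph.Walk.cons hu p = SimpleGraph.Walk.cons hu' p' := congrArg Subtype.val heq
  have hsup := congrArg SimpleGraph.Walk.support hval
  rw [SimpleGraph.Walk.support_cons, SimpleGraph.Walk.support_cons,
    p.support_eq_cons, p'.support_eq_cons] at hsup
  simp only [List.cons.injEq] at hsup
  exact hsup.2.1

private lemma forest_orient {V : Type} [Fintype V] [DecidableEq V] {H : SimpleGraph V}
    (hH : H.IsAcyclic) :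
    ∃ t : Sym2 V → V, (∀ e ∈ H.edgeSet, t e ∈ e) ∧
      ∀ e ∈ H.edgeSet, ∀ e' ∈ H.edgeSet, t e = t e' → e = e' := by
  classical
  set R : V → V := fun v => (H.connectedComponentMk v).out with hRdef
  set d : V → ℕ := fun v => H.dist v (R v) with hddef
  have hmax : ∀ e : Sym2 V, ∃ x, x ∈ e ∧ ∀ y ∈ e, d y ≤ d x := by
    intro e
    induction e using Sym2.inductionOn with
    | hf a b =>
      rcases le_total (d a) (d b) with hab | hab
      · refine ⟨b, Sym2.mem_mk_right a b, ?_⟩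
        intro y hy
        rcases Sym2.mem_iff.mp hy with rfl | rfl
        · exact hab
        · exact le_refl _
      · refine ⟨a, Sym2.mem_mk_left a b, ?_⟩
        intro y hy
        rcases Sym2.mem_iff.mp hy with rfl | rfl
        · exact le_refl _
        · exact hab
  choose z hzmem hzmax using hmax
  have hadj : ∀ {e : Sym2 V}, e ∈ H.edgeSet → H.Adj (z e) (Sym2.Mem.other' (hzmem e)) := by
    intro e he
    rw [← SimpleGraph.mem_edgeSet, Sym2.other_spec' (hzmem e)]
    exact he
  have hreach : ∀ v : V, H.Reachable v (R v) := by
    intro v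
    apply SimpleGraph.ConnectedComponent.exact
    exact (Quot.out_eq (H.connectedComponentMk v)).symm
  have hRadj : ∀ {a b : V}, H.Adj a b → R a = R b := by
    intro a b hab
    simp only [hRdef]
    rw [SimpleGraph.ConnectedComponent.connectedComponentMk_eq_of_adj hab]
  refine ⟨z, fun e _ => hzmem e, ?_⟩
  intro e he e' he' hzz
  set u := Sym2.Mem.other' (hzmem e) with hu
  set u' := Sym2.Mem.other' (hzmem e') with hu'
  have hadj1 : H.Adj (z e) u := hadj he
  have hadj2 : H.Adj (z e) u' := hzz ▸ hadj he'
  have hR1 : R u = R (z e) := (hRadj hadj1.symm)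
  have hR2 : R u' = R (z e) := (hRadj hadj2.symm)
  have hd1 : H.dist u (R (z e)) ≤ H.dist (z e) (R (z e)) := by
    have := hzmax e u (Sym2.other_mem' (hzmem e))
    simpa only [hddef, hR1] using this
  have hd2 : H.dist u' (R (z e)) ≤ H.dist (z e) (R (z e)) := by
    have := hzmax e' u' (Sym2.other_mem' (hzmem e'))
    simpa only [hddef, hR2, hzz] using this
  have hru : H.Reachable u (R (z e)) := hR1 ▸ hreach u
  have hru' : H.Reachable u' (R (z e)) := hR2 ▸ hreach u'
  have huu : u = u' := forest_no_two_parents hH hadj1 hadj2 hru hru' hd1 hd2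
  have hspec : s(z e, u) = e := Sym2.other_spec' (hzmem e)
  have hspec' : s(z e', u') = e' := Sym2.other_spec' (hzmem e')
  rw [← hspec, ← hspec', hzz, huu]

private lemma exists_tail {V : Type} [Fintype V] [DecidableEq V]
    {G : SimpleGraph V} [DecidableRel G.Adj] {α : ℕ} (h : G.HasArboricityLE α) :
    ∃ T : Sym2 V → V, (∀ e ∈ G.edgeSet, T e ∈ e) ∧
      ∀ v : V, (G.edgeFinset.filter (fun e => T e = v)).card ≤ α := by
  classical
  obtain ⟨f, hf, hforest⟩ := h
  have hor := fun i : ℕ => forest_orient (hforest i)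
  choose t ht1 ht2 using hor
  have hmem : ∀ e ∈ G.edgeSet,
      e ∈ (SimpleGraph.fromEdgeSet {x | x ∈ G.edgeSet ∧ f x = f e}).edgeSet := by
    intro e he
    rw [SimpleGraph.edgeSet_fromEdgeSet]
    exact ⟨⟨he, rfl⟩, G.not_isDiag_of_mem_edgeSet he⟩
  refine ⟨fun e => t (f e) e, fun e he => ht1 (f e) e (hmem e he), ?_⟩
  intro v
  have : ((G.edgeFinset.filter (fun e => t (f e) e = v)).card ≤ (Finset.range α).card) := by
    apply Finset.card_le_card_of_injOn f
    · intro e he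
      rw [Finset.mem_coe, Finset.mem_filter] at he
      rw [Finset.mem_coe, Finset.mem_range]
      exact hf e (SimpleGraph.mem_edgeFinset.mp he.1)
    · intro e he e' he' hfe
      rw [Finset.coe_filter, Set.mem_setOf_eq] at he he'
      obtain ⟨he1, he2⟩ := he
      obtain ⟨he1', he2'⟩ := he'
      have hes : e ∈ (SimpleGraph.fromEdgeSet {x | x ∈ G.edgeSet ∧ f x = f e}).edgeSet :=
        hmem e (SimpleGraph.mem_edgeFinset.mp he1)
      have hes' : e' ∈ (SimpleGraph.fromEdgeSet {x | x ∈ G.edgeSet ∧ f x = f e}).edgeSet := by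
        rw [SimpleGraph.edgeSet_fromEdgeSet]
        exact ⟨⟨SimpleGraph.mem_edgeFinset.mp he1', hfe.symm⟩,
          G.not_isDiag_of_mem_edgeSet (SimpleGraph.mem_edgeFinset.mp he1')⟩
      have h3 : t (f e) e' = v := by rw [hfe]; exact he2'
      exact ht2 (f e) e hes e' hes' (he2.trans h3.symm)
  simpa using this

private lemma drawSpace_repr {V : Type} [Fintype V] [DecidableEq V] [MeasurableSpace V]
    (G : SimpleGraph V) [DecidableRel G.Adj] (w : Sym2 V → ℝ) (s : ℕ) :
    drawSpace G w s =
      ∑ ω : Fin s × V → V,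
        (∏ c : Fin s × V, ENNReal.ofReal (if ω c ∈ G.neighborFinset c.2 then
            w s(c.2, ω c) / ∑ x ∈ G.neighborFinset c.2, w s(c.2, x) else 0)) •
          Measure.dirac ω := by
  classical
  unfold drawSpace
  refine (Measure.pi_eq (μ := fun i : Fin s × V => drawM G w i.2) fun B hB => ?_)
  have hBm : MeasurableSet (Set.pi Set.univ B) := MeasurableSet.univ_pi hB
  rw [Measure.finset_sum_apply]
  simp only [Measure.smul_apply, smul_eq_mul]
  have hdirac : ∀ ω : Fin s × V → V,
      Measure.dirac ω (Set.pi Set.univ B) = ∏ c, (if ω c ∈ B c then (1 : ℝ≥0∞) else 0) := by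
    intro ω
    rw [Measure.dirac_apply' _ hBm]
    by_cases h : ω ∈ Set.pi Set.univ B
    · rw [Set.indicator_of_mem h]
      rw [Set.mem_univ_pi] at h
      simp [h]
    · rw [Set.indicator_of_notMem h]
      rw [Set.mem_univ_pi] at h
      push_neg at h
      obtain ⟨c, hc⟩ := h
      exact (Finset.prod_eq_zero (Finset.mem_univ c) (by simp [hc])).symm
  calc ∑ ω : Fin s × V → V,
        (∏ c : Fin s × V, ENNReal.ofReal (if ω c ∈ G.neighborFinset c.2 then
            w s(c.2, ω c) / ∑ x ∈ G.neighborFinset c.2, w s(c.2, x) else 0)) *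
          Measure.dirac ω (Set.pi Set.univ B)
      = ∑ ω : Fin s × V → V, ∏ c : Fin s × V,
          (ENNReal.ofReal (if ω c ∈ G.neighborFinset c.2 then
            w s(c.2, ω c) / ∑ x ∈ G.neighborFinset c.2, w s(c.2, x) else 0) *
            (if ω c ∈ B c then 1 else 0)) := by
        refine Finset.sum_congr rfl fun ω _ => ?_
        rw [hdirac ω, ← Finset.prod_mul_distrib]
    _ = ∏ c : Fin s × V, ∑ u : V,
          (ENNReal.ofReal (if u ∈ G.neighborFinset c.2 then
            w s(c.2, u) / ∑ x ∈ G.neighborFinset c.2, w s(c.2, x) else 0) *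
            (if u ∈ B c then 1 else 0)) := by
        rw [← Fintype.piFinset_univ]
        exact Finset.sum_prod_piFinset Finset.univ (fun c u =>
          ENNReal.ofReal (if u ∈ G.neighborFinset c.2 then
            w s(c.2, u) / ∑ x ∈ G.neighborFinset c.2, w s(c.2, x) else 0) *
            (if u ∈ B c then 1 else 0))
    _ = ∏ c : Fin s × V, drawM G w c.2 (B c) := by
        refine Finset.prod_congr rfl fun c _ => ?_
        rw [drawM, Measure.finset_sum_apply]
        simp only [Measure.smul_apply, smul_eq_mul, Measure.dirac_apply' _ (hB c),
          Set.indicator_apply, Pi.one_apply]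
        rw [Finset.sum_congr rfl (fun u (_ : u ∈ Finset.univ) => by
          rw [show ENNReal.ofReal (if u ∈ G.neighborFinset c.2 then
              w s(c.2, u) / ∑ x ∈ G.neighborFinset c.2, w s(c.2, x) else 0)
            = (if u ∈ G.neighborFinset c.2 then ENNReal.ofReal
                (w s(c.2, u) / ∑ x ∈ G.neighborFinset c.2, w s(c.2, x)) else 0) from
            by split <;> simp, ite_mul, zero_mul])]
        rw [Finset.sum_ite_mem, Finset.univ_inter]

end Aux

open Classical in
/-- If each vertex of a weighted graph of arboricity at most `α` independently
draws an incident edge with probability proportional to its weight,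
`s = Θ(log(1/δ))` times, and keeps a maximum-weight drawn edge, then with
probability at least `1 - δ` the total weight of the kept edges is at least
`w(G)/(16α)`. -/
theorem weighted_edge_selection :
    ∃ C : ℝ, 0 < C ∧
      ∀ (V : Type) [Fintype V] [DecidableEq V] [MeasurableSpace V]
        (G : SimpleGraph V) [DecidableRel G.Adj]
        (α : ℕ), 1 ≤ α →
        ∀ w : Sym2 V → ℝ, (∀ e, 0 ≤ w e) →
        G.HasArboricityLE α →
        (∀ v : V, 0 < ∑ x ∈ G.neighborFinset v, w s(v, x)) →
        ∀ δ : ℝ, 0 < δ → δ < 1 →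
        ∀ s : ℕ, C * (Real.log (1 / δ) + 1) ≤ (s : ℝ) →
        ENNReal.ofReal (1 - δ) ≤
          drawSpace G w s
            {ω | ∀ sel : V → Sym2 V,
              (∀ v, (∃ i : Fin s, sel v = s(v, ω (i, v))) ∧
                ∀ i : Fin s, w s(v, ω (i, v)) ≤ w (sel v)) →
              (∑ e ∈ G.edgeFinset, w e) / (16 * α) ≤
                ∑ e ∈ G.edgeFinset.filter (fun e => ∃ v, sel v = e), w e} := by
  classical
  refine ⟨10, by norm_num, ?_⟩
  intro V _ _ _ G _ α hα w hw hArb hwv δ hδ0 hδ1 s hs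
  -- basic numeric facts
  have hL : 0 ≤ Real.log (1 / δ) := by
    apply Real.log_nonneg
    rw [le_div_iff₀ hδ0]
    linarith
  have hs10 : (10 : ℝ) ≤ (s : ℝ) := by nlinarith
  have hs1 : 1 ≤ s := by exact_mod_cast le_trans (by norm_num : (1:ℝ) ≤ 10) hs10
  have hα0 : (0 : ℝ) < (α : ℝ) := by exact_mod_cast hα
  set W : ℝ := ∑ e ∈ G.edgeFinset, w e with hWdef
  have hW0' : 0 ≤ W := Finset.sum_nonneg fun e _ => hw e
  obtain ⟨T, hT1, hT2⟩ := exists_tail hArb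
  -- quantile thresholds
  have hexτ : ∀ v : V, ∃ ttt : ℝ, 0 ≤ ttt ∧
      (∑ x ∈ G.neighborFinset v, w s(v, x)) / 4 ≤
        ∑ x ∈ (G.neighborFinset v).filter (fun x => ttt ≤ w s(v, x)), w s(v, x) ∧
      ∑ x ∈ (G.neighborFinset v).filter (fun x => ttt < w s(v, x)), w s(v, x) ≤
        (∑ x ∈ G.neighborFinset v, w s(v, x)) / 4 := by
    intro v
    have hwvv := hwv v
    have hNne : (G.neighborFinset v).Nonempty := by
      by_contra hcon
      rw [Finset.not_nonempty_iff_eq_empty] at hcon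
      rw [hcon, Finset.sum_empty] at hwvv
      linarith
    obtain ⟨u0, hu0, hmin⟩ := Finset.exists_min_image (G.neighborFinset v)
      (fun u => w s(v, u)) hNne
    set Cand := (G.neighborFinset v).filter (fun u => (∑ x ∈ G.neighborFinset v, w s(v, x)) / 4 ≤
      ∑ x ∈ (G.neighborFinset v).filter (fun x => w s(v, u) ≤ w s(v, x)), w s(v, x)) with hCdef
    have hCne : Cand.Nonempty := by
      refine ⟨u0, Finset.mem_filter.2 ⟨hu0, ?_⟩⟩
      have heq : (G.neighborFinset v).filter (fun x => w s(v, u0) ≤ w s(v, x)) =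
          G.neighborFinset v := Finset.filter_true_of_mem (fun x hx => hmin x hx)
      rw [heq]
      linarith
    obtain ⟨us, husC, hmaxC⟩ := Finset.exists_max_image Cand (fun u => w s(v, u)) hCne
    refine ⟨w s(v, us), hw _, (Finset.mem_filter.mp husC).2, ?_⟩
    by_cases hA : ((G.neighborFinset v).filter (fun x => w s(v, us) < w s(v, x))).Nonempty
    · obtain ⟨x0, hx0, hminA⟩ := Finset.exists_min_image _ (fun u => w s(v, u)) hA
      have hx0N : x0 ∈ G.neighborFinset v := (Finset.mem_filter.mp hx0).1
      have hx0gt : w s(v, us) < w s(v, x0) := (Finset.mem_filter.mp hx0).2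
      by_contra hcon
      push_neg at hcon
      have hsets : (G.neighborFinset v).filter (fun x => w s(v, x0) ≤ w s(v, x)) =
          (G.neighborFinset v).filter (fun x => w s(v, us) < w s(v, x)) := by
        ext x
        simp only [Finset.mem_filter]
        constructor
        · rintro ⟨h1, h2⟩
          exact ⟨h1, lt_of_lt_of_le hx0gt h2⟩
        · rintro ⟨h1, h2⟩
          exact ⟨h1, hminA x (Finset.mem_filter.2 ⟨h1, h2⟩)⟩
      have hx0C : x0 ∈ Cand := Finset.mem_filter.2 ⟨hx0N, by rw [hsets]; linarith⟩
      have := hmaxC x0 hx0C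
      linarith
    · rw [Finset.not_nonempty_iff_eq_empty] at hA
      rw [hA, Finset.sum_empty]
      linarith
  choose τ hτ0 hτ1 hτ2 using hexτ
  -- handshake
  have hhand : ∑ v : V, (∑ x ∈ G.neighborFinset v, w s(v, x)) = 2 * W := by
    have h1 : ∑ v : V, (∑ x ∈ G.neighborFinset v, w s(v, x))
        = ∑ p ∈ (Finset.univ ×ˢ Finset.univ).filter (fun p : V × V => G.Adj p.1 p.2),
            w s(p.1, p.2) := by
      rw [Finset.sum_filter, Finset.sum_product]
      refine Finset.sum_congr rfl fun v _ => ?_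
      rw [SimpleGraph.neighborFinset_eq_filter, Finset.sum_filter]
    rw [h1, ← Finset.sum_fiberwise_of_maps_to (g := fun p : V × V => s(p.1, p.2))
      (t := G.edgeFinset) (fun p hp => by
        rw [Finset.mem_filter] at hp
        rw [SimpleGraph.mem_edgeFinset, SimpleGraph.mem_edgeSet]
        exact hp.2) (fun p => w s(p.1, p.2))]
    rw [hWdef, Finset.mul_sum]
    refine Finset.sum_congr rfl fun e he => ?_
    obtain ⟨a, b, rfl⟩ : ∃ a b, e = s(a, b) := by
      induction e using Sym2.inductionOn with
      | hf a b => exact ⟨a, b, rfl⟩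
    have hab : G.Adj a b := (SimpleGraph.mem_edgeSet G).mp (SimpleGraph.mem_edgeFinset.mp he)
    have hfib : (((Finset.univ ×ˢ Finset.univ).filter
          (fun p : V × V => G.Adj p.1 p.2)).filter (fun p => s(p.1, p.2) = s(a, b)))
        = {(a, b), (b, a)} := by
      ext ⟨x, y⟩
      simp only [Finset.mem_filter, Finset.mem_product, Finset.mem_univ, true_and,
        Finset.mem_insert, Finset.mem_singleton, Sym2.eq_iff, Prod.mk.injEq]
      constructor
      · rintro ⟨hxy, (⟨rfl, rfl⟩ | ⟨rfl, rfl⟩)⟩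
        · exact Or.inl ⟨rfl, rfl⟩
        · exact Or.inr ⟨rfl, rfl⟩
      · rintro (⟨rfl, rfl⟩ | ⟨rfl, rfl⟩)
        · exact ⟨hab, Or.inl ⟨rfl, rfl⟩⟩
        · exact ⟨hab.symm, Or.inr ⟨rfl, rfl⟩⟩
    rw [hfib, Finset.sum_pair (by
      intro hcon
      rw [Prod.mk.injEq] at hcon
      exact hab.ne hcon.1)]
    rw [show s(b, a) = s(a, b) from Sym2.eq_swap]
    ring
  -- key inequality
  have hfirst : ∑ e ∈ G.edgeFinset.filter (fun e => w e ≤ τ (T e)), w e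
      ≤ (α : ℝ) * ∑ v : V, τ v := by
    refine le_trans (Finset.sum_le_sum fun e he => (Finset.mem_filter.mp he).2) ?_
    rw [← Finset.sum_fiberwise_of_maps_to (g := T) (t := Finset.univ)
      (fun e _ => Finset.mem_univ (T e)) (fun e => τ (T e))]
    rw [Finset.mul_sum]
    refine Finset.sum_le_sum fun v _ => ?_
    rw [Finset.sum_congr rfl (fun e he => by
      rw [(Finset.mem_filter.mp he).2] :
        ∀ e ∈ (G.edgeFinset.filter (fun e => w e ≤ τ (T e))).filter (fun e => T e = v),
          τ (T e) = τ v)]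
    rw [Finset.sum_const, nsmul_eq_mul]
    have hsub : (G.edgeFinset.filter (fun e => w e ≤ τ (T e))).filter (fun e => T e = v)
        ⊆ G.edgeFinset.filter (fun e => T e = v) := by
      intro e he
      rw [Finset.mem_filter] at he ⊢
      exact ⟨(Finset.mem_filter.mp he.1).1, he.2⟩
    have hcard : (((G.edgeFinset.filter (fun e => w e ≤ τ (T e))).filter
        (fun e => T e = v)).card : ℝ) ≤ (α : ℝ) := by
      exact_mod_cast le_trans (Finset.card_le_card hsub) (hT2 v)
    exact mul_le_mul_of_nonneg_right hcard (hτ0 v)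
  have hsecond : ∑ e ∈ G.edgeFinset.filter (fun e => ¬ w e ≤ τ (T e)), w e
      ≤ ∑ v : V, (∑ x ∈ G.neighborFinset v, w s(v, x)) / 4 := by
    set o : Sym2 V → V := fun e => if h : T e ∈ e then Sym2.Mem.other' h else T e with hodef
    have ho : ∀ e ∈ G.edgeFinset, s(T e, o e) = e := by
      intro e he
      have hTe : T e ∈ e := hT1 e (SimpleGraph.mem_edgeFinset.mp he)
      simp only [hodef, dif_pos hTe]
      exact Sym2.other_spec' hTe
    set g : V × V → ℝ := fun p =>
      if p.2 ∈ G.neighborFinset p.1 ∧ τ p.1 < w s(p.1, p.2) then w s(p.1, p.2) else 0 with hgdef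
    have hg0 : ∀ p, 0 ≤ g p := by
      intro p
      simp only [hgdef]
      split
      · exact hw _
      · exact le_refl 0
    have hgval : ∀ e ∈ G.edgeFinset.filter (fun e => ¬ w e ≤ τ (T e)), g (T e, o e) = w e := by
      intro e he
      rw [Finset.mem_filter] at he
      have hoe := ho e he.1
      have hadj : G.Adj (T e) (o e) := by
        rw [← SimpleGraph.mem_edgeSet, hoe]
        exact SimpleGraph.mem_edgeFinset.mp he.1
      have hcond : (o e) ∈ G.neighborFinset (T e) ∧ τ (T e) < w s(T e, o e) := by
        constructor
        · exact (SimpleGraph.mem_neighborFinset _ _ _).mpr hadj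
        · rw [hoe]
          exact not_le.mp he.2
      simp only [hgdef, if_pos hcond]
      rw [hoe]
    have hinj : ∀ e ∈ G.edgeFinset.filter (fun e => ¬ w e ≤ τ (T e)),
        ∀ e' ∈ G.edgeFinset.filter (fun e => ¬ w e ≤ τ (T e)),
        (T e, o e) = (T e', o e') → e = e' := by
      intro e he e' he' hp
      rw [Prod.mk.injEq] at hp
      rw [← ho e (Finset.mem_filter.mp he).1, ← ho e' (Finset.mem_filter.mp he').1,
        hp.1, hp.2]
    calc ∑ e ∈ G.edgeFinset.filter (fun e => ¬ w e ≤ τ (T e)), w e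
        = ∑ e ∈ G.edgeFinset.filter (fun e => ¬ w e ≤ τ (T e)), g (T e, o e) :=
          (Finset.sum_congr rfl fun e he => (hgval e he).symm)
      _ = ∑ p ∈ (G.edgeFinset.filter (fun e => ¬ w e ≤ τ (T e))).image
            (fun e => (T e, o e)), g p := (Finset.sum_image hinj).symm
      _ ≤ ∑ p ∈ Finset.univ ×ˢ Finset.univ, g p := by
          refine Finset.sum_le_sum_of_subset_of_nonneg ?_ (fun p _ _ => hg0 p)
          intro p _
          simp [Finset.mem_product]
      _ = ∑ v : V, ∑ u : V, g (v, u) := Finset.sum_product _ _ _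
      _ ≤ ∑ v : V, (∑ x ∈ G.neighborFinset v, w s(v, x)) / 4 := by
          refine Finset.sum_le_sum fun v _ => ?_
          have heq : ∀ u : V, g (v, u) = if u ∈ (G.neighborFinset v).filter
              (fun x => τ v < w s(v, x)) then w s(v, u) else 0 := by
            intro u
            simp only [hgdef, Finset.mem_filter]
          rw [Finset.sum_congr rfl (fun u _ => heq u), Finset.sum_ite_mem, Finset.univ_inter]
          exact hτ2 v
  have hkey : W / (2 * (α : ℝ)) ≤ ∑ v : V, τ v := by
    have hsplit := Finset.sum_filter_add_sum_filter_not G.edgeFinset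
      (fun e => w e ≤ τ (T e)) w
    have h14 : ∑ v : V, (∑ x ∈ G.neighborFinset v, w s(v, x)) / 4 = W / 2 := by
      rw [← Finset.sum_div, hhand]
      ring
    rw [div_le_iff₀ (by positivity)]
    have hWsum : W = ∑ e ∈ G.edgeFinset.filter (fun e => w e ≤ τ (T e)), w e +
        ∑ e ∈ G.edgeFinset.filter (fun e => ¬ w e ≤ τ (T e)), w e := by
      rw [hsplit]
    nlinarith [hfirst, hsecond, h14, hWsum]
  -- probability part
  set q : (Fin s × V → V) → ℝ := fun ω => ∏ c : Fin s × V,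
    (if ω c ∈ G.neighborFinset c.2 then
      w s(c.2, ω c) / ∑ x ∈ G.neighborFinset c.2, w s(c.2, x) else 0) with hqdef
  have hq0 : ∀ ω, 0 ≤ q ω := by
    intro ω
    refine Finset.prod_nonneg fun c _ => ?_
    split
    · exact div_nonneg (hw _) (le_of_lt (hwv c.2))
    · exact le_refl 0
  have hqfac : ∀ g : (Fin s × V) → V → ℝ,
      (∑ ω : Fin s × V → V, ∏ c : Fin s × V, g c (ω c)) = ∏ c : Fin s × V, ∑ u : V, g c u := by
    intro g
    rw [← Fintype.piFinset_univ]
    exact Finset.sum_prod_piFinset Finset.univ g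
  have hcoord1 : ∀ c : Fin s × V, (∑ u : V, if u ∈ G.neighborFinset c.2 then
      w s(c.2, u) / ∑ x ∈ G.neighborFinset c.2, w s(c.2, x) else 0) = 1 := by
    intro c
    rw [Finset.sum_ite_mem, Finset.univ_inter, ← Finset.sum_div,
      div_self (ne_of_gt (hwv c.2))]
  have hq1 : ∑ ω : Fin s × V → V, q ω = 1 := by
    simp only [hqdef]
    rw [hqfac (fun c u => if u ∈ G.neighborFinset c.2 then
      w s(c.2, u) / ∑ x ∈ G.neighborFinset c.2, w s(c.2, x) else 0)]
    exact Finset.prod_eq_one fun c _ => hcoord1 c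
  have hFinne : (Finset.univ : Finset (Fin s)).Nonempty := ⟨⟨0, hs1⟩, Finset.mem_univ _⟩
  set M : V → (Fin s × V → V) → ℝ := fun v ω =>
    Finset.univ.sup' hFinne (fun i : Fin s => w s(v, ω (i, v))) with hMdef
  have hM0 : ∀ v ω, 0 ≤ M v ω := by
    intro v ω
    simp only [hMdef]
    exact le_trans (hw s(v, ω (⟨0, hs1⟩, v)))
      (Finset.le_sup' (fun i : Fin s => w s(v, ω (i, v)))
        (Finset.mem_univ (⟨0, hs1⟩ : Fin s)))
  have hmarg : ∀ v : V, ∑ ω ∈ Finset.univ.filter (fun ω : Fin s × V → V => M v ω < τ v), q ω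
      ≤ (3/4 : ℝ) ^ s := by
    intro v
    have hflt : ∀ ω : Fin s × V → V, (M v ω < τ v ↔ ∀ i : Fin s, w s(v, ω (i, v)) < τ v) := by
      intro ω
      simp only [hMdef]
      rw [Finset.sup'_lt_iff]
      exact ⟨fun h i => h i (Finset.mem_univ i), fun h i _ => h i⟩
    set σ : ℝ := (∑ u ∈ (G.neighborFinset v).filter (fun u => w s(v, u) < τ v), w s(v, u)) /
      (∑ x ∈ G.neighborFinset v, w s(v, x)) with hσdef
    have hσ0 : 0 ≤ σ := div_nonneg (Finset.sum_nonneg fun u _ => hw _) (le_of_lt (hwv v))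
    have hσle : σ ≤ 3/4 := by
      rw [hσdef, div_le_iff₀ (hwv v)]
      have hQ : (G.neighborFinset v).filter (fun u => ¬ τ v ≤ w s(v, u)) =
          (G.neighborFinset v).filter (fun u => w s(v, u) < τ v) :=
        Finset.filter_congr (fun u _ => not_le)
      have hsplit := Finset.sum_filter_add_sum_filter_not (G.neighborFinset v)
        (fun u => τ v ≤ w s(v, u)) (fun u => w s(v, u))
      rw [hQ] at hsplit
      have := hτ1 v
      linarith
    have hkeyq : ∑ ω ∈ Finset.univ.filter (fun ω : Fin s × V → V => M v ω < τ v), q ω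
        = σ ^ s := by
      rw [show Finset.univ.filter (fun ω : Fin s × V → V => M v ω < τ v)
          = Finset.univ.filter (fun ω : Fin s × V → V => ∀ i : Fin s, w s(v, ω (i, v)) < τ v)
          from Finset.filter_congr (fun ω _ => hflt ω)]
      rw [Finset.sum_filter]
      have e1 : ∀ ω : Fin s × V → V,
          (if (∀ i : Fin s, w s(v, ω (i, v)) < τ v) then q ω else 0)
          = ∏ c : Fin s × V,
            ((if ω c ∈ G.neighborFinset c.2 then
              w s(c.2, ω c) / ∑ x ∈ G.neighborFinset c.2, w s(c.2, x) else 0) *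
             (if c.2 = v then (if w s(c.2, ω c) < τ c.2 then 1 else 0) else 1)) := by
        intro ω
        rw [Finset.prod_mul_distrib]
        have e2 : (∏ c : Fin s × V,
            (if c.2 = v then (if w s(c.2, ω c) < τ c.2 then (1:ℝ) else 0) else 1))
            = if (∀ i : Fin s, w s(v, ω (i, v)) < τ v) then 1 else 0 := by
          rw [Fintype.prod_prod_type]
          have e3 : ∀ i : Fin s, (∏ v' : V, (if v' = v then
              (if w s(v', ω (i, v')) < τ v' then (1:ℝ) else 0) else 1))
              = (if w s(v, ω (i, v)) < τ v then (1:ℝ) else 0) := by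
            intro i
            rw [Finset.prod_ite_eq' Finset.univ v
              (fun v' => if w s(v', ω (i, v')) < τ v' then (1:ℝ) else 0)]
            simp
          rw [Finset.prod_congr rfl (fun i _ => e3 i)]
          rw [Fintype.prod_boole]
          congr
        rw [e2]
        simp only [hqdef, mul_ite, mul_one, mul_zero]
      rw [Finset.sum_congr rfl (fun ω _ => e1 ω)]
      rw [hqfac (fun c u => ((if u ∈ G.neighborFinset c.2 then
              w s(c.2, u) / ∑ x ∈ G.neighborFinset c.2, w s(c.2, x) else 0) *
             (if c.2 = v then (if w s(c.2, u) < τ c.2 then 1 else 0) else 1)))]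
      have hS : ∀ c : Fin s × V,
          (∑ u : V, ((if u ∈ G.neighborFinset c.2 then
              w s(c.2, u) / ∑ x ∈ G.neighborFinset c.2, w s(c.2, x) else 0) *
            (if c.2 = v then (if w s(c.2, u) < τ c.2 then 1 else 0) else 1)))
          = if c.2 = v then σ else 1 := by
        intro c
        by_cases hc : c.2 = v
        · rw [if_pos hc]
          have e4 : ∀ u : V, ((if u ∈ G.neighborFinset c.2 then
              w s(c.2, u) / ∑ x ∈ G.neighborFinset c.2, w s(c.2, x) else 0) *
              (if c.2 = v then (if w s(c.2, u) < τ c.2 then (1:ℝ) else 0) else 1))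
              = (if u ∈ (G.neighborFinset v).filter (fun u => w s(v, u) < τ v) then
                  w s(v, u) / ∑ x ∈ G.neighborFinset v, w s(v, x) else 0) := by
            intro u
            rw [hc]
            by_cases h1 : u ∈ G.neighborFinset v <;> by_cases h2 : w s(v, u) < τ v <;>
              simp [h1, h2, Finset.mem_filter]
          rw [Finset.sum_congr rfl (fun u _ => e4 u), Finset.sum_ite_mem, Finset.univ_inter,
            hσdef, Finset.sum_div]
        · rw [if_neg hc]
          rw [Finset.sum_congr rfl (fun u (_ : u ∈ Finset.univ) => by
            rw [if_neg hc, mul_one] :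
            ∀ u ∈ Finset.univ, ((if u ∈ G.neighborFinset c.2 then
              w s(c.2, u) / ∑ x ∈ G.neighborFinset c.2, w s(c.2, x) else 0) *
            (if c.2 = v then (if w s(c.2, u) < τ c.2 then (1:ℝ) else 0) else 1))
            = (if u ∈ G.neighborFinset c.2 then
              w s(c.2, u) / ∑ x ∈ G.neighborFinset c.2, w s(c.2, x) else 0))]
          exact hcoord1 c
      rw [Finset.prod_congr rfl (fun c _ => hS c)]
      rw [Fintype.prod_prod_type]
      rw [Finset.prod_congr rfl (fun i (_ : i ∈ Finset.univ) => by
        rw [Finset.prod_ite_eq' Finset.univ v (fun _ => σ)]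
        simp :
        ∀ i ∈ (Finset.univ : Finset (Fin s)),
          (∏ v' : V, if (i, v').2 = v then σ else 1) = σ)]
      rw [Finset.prod_const, Finset.card_univ, Fintype.card_fin]
    rw [hkeyq]
    exact pow_le_pow_left₀ hσ0 hσle s
  have hbad : ∑ ω ∈ Finset.univ.filter
      (fun ω : Fin s × V → V => ¬ (W / (8 * (α : ℝ)) ≤ ∑ v : V, M v ω)), q ω
      ≤ 2 * (3/4 : ℝ) ^ s := by
    rcases isEmpty_or_nonempty V with hV | hV
    · haveI := hV
      have hWe : W = 0 := by
        rw [hWdef]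
        refine Finset.sum_eq_zero fun e he => ?_
        exact absurd he (by
          induction e using Sym2.inductionOn with
          | hf a b => exact isEmptyElim a)
      have hfe : Finset.univ.filter
          (fun ω : Fin s × V → V => ¬ (W / (8 * (α : ℝ)) ≤ ∑ v : V, M v ω)) = ∅ := by
        refine Finset.filter_false_of_mem fun ω _ => ?_
        intro hcon
        apply hcon
        rw [hWe, Finset.univ_eq_empty, Finset.sum_empty]
        simp
      rw [hfe, Finset.sum_empty]
      positivity
    · obtain ⟨v0⟩ := hV
      obtain ⟨u0, hu0N, hu0pos⟩ : ∃ u ∈ G.neighborFinset v0, 0 < w s(v0, u) := by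
        by_contra hcon
        push_neg at hcon
        have : ∑ x ∈ G.neighborFinset v0, w s(v0, x) ≤ 0 :=
          Finset.sum_nonpos fun x hx => hcon x hx
        linarith [hwv v0]
      have hW0 : 0 < W := by
        rw [hWdef]
        refine Finset.sum_pos' (fun e _ => hw e) ⟨s(v0, u0), ?_, hu0pos⟩
        rw [SimpleGraph.mem_edgeFinset]
        exact (SimpleGraph.mem_edgeSet G).mpr ((SimpleGraph.mem_neighborFinset _ _ _).mp hu0N)
      have hStau : 0 < ∑ v : V, τ v := lt_of_lt_of_le
        (div_pos hW0 (show (0:ℝ) < 2 * (α:ℝ) by positivity)) hkey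
      have hincl : ∀ ω : Fin s × V → V, ¬ (W / (8 * (α : ℝ)) ≤ ∑ v : V, M v ω) →
          (∑ v : V, τ v) / 2 ≤ ∑ v : V, τ v * (if M v ω < τ v then 1 else 0) := by
        intro ω hno
        by_contra hlt
        push_neg at hlt
        apply hno
        have h1 : ∀ v : V, τ v - τ v * (if M v ω < τ v then 1 else 0) ≤ M v ω := by
          intro v
          by_cases h : M v ω < τ v
          · simpa [h] using hM0 v ω
          · simpa [h] using not_lt.mp h
        have h2 : (∑ v : V, τ v) - (∑ v : V, τ v * (if M v ω < τ v then 1 else 0))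
            ≤ ∑ v : V, M v ω := by
          rw [← Finset.sum_sub_distrib]
          exact Finset.sum_le_sum fun v _ => h1 v
        have h3 : W / (8 * (α : ℝ)) = W / (2 * (α : ℝ)) / 4 := by
          rw [div_div]
          ring_nf
        have h4 : 0 < W / (2 * (α : ℝ)) := div_pos hW0 (by positivity)
        linarith [hkey]
      have hY0 : ∀ ω : Fin s × V → V, 0 ≤ ∑ v : V, τ v * (if M v ω < τ v then 1 else 0) := by
        intro ω
        refine Finset.sum_nonneg fun v _ => ?_
        by_cases h : M v ω < τ v <;> simp [h, hτ0 v]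
      have hstep : ∑ ω ∈ Finset.univ.filter
          (fun ω : Fin s × V → V => ¬ (W / (8 * (α : ℝ)) ≤ ∑ v : V, M v ω)), q ω
          ≤ (2 / (∑ v : V, τ v)) *
            ∑ ω : Fin s × V → V, q ω * (∑ v : V, τ v * (if M v ω < τ v then 1 else 0)) := by
        rw [Finset.mul_sum]
        refine le_trans (Finset.sum_le_sum fun ω hω => ?_)
          (Finset.sum_le_sum_of_subset_of_nonneg (Finset.filter_subset _ _) fun ω _ _ =>
            mul_nonneg (by positivity) (mul_nonneg (hq0 ω) (hY0 ω)))
        have hY := hincl ω (Finset.mem_filter.mp hω).2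
        have hge1 : (1:ℝ) ≤ (∑ v : V, τ v * (if M v ω < τ v then 1 else 0)) *
            (2 / (∑ v : V, τ v)) := by
          calc (1:ℝ) = ((∑ v : V, τ v) / 2) * (2 / (∑ v : V, τ v)) := by
                field_simp
            _ ≤ _ := mul_le_mul_of_nonneg_right hY (by positivity)
        calc q ω = q ω * 1 := (mul_one _).symm
          _ ≤ q ω * ((∑ v : V, τ v * (if M v ω < τ v then 1 else 0)) *
              (2 / (∑ v : V, τ v))) := mul_le_mul_of_nonneg_left hge1 (hq0 ω)
          _ = (2 / (∑ v : V, τ v)) * (q ω * (∑ v : V, τ v * (if M v ω < τ v then 1 else 0))) := by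
              ring
      have hswap : ∑ ω : Fin s × V → V, q ω * (∑ v : V, τ v * (if M v ω < τ v then 1 else 0))
          = ∑ v : V, τ v *
            (∑ ω ∈ Finset.univ.filter (fun ω : Fin s × V → V => M v ω < τ v), q ω) := by
        rw [Finset.sum_congr rfl (fun ω (_ : ω ∈ Finset.univ) => Finset.mul_sum _ _ _)]
        rw [Finset.sum_comm]
        refine Finset.sum_congr rfl fun v _ => ?_
        rw [Finset.sum_filter, Finset.mul_sum]
        refine Finset.sum_congr rfl fun ω _ => ?_
        by_cases h : M v ω < τ v
        · simp [h]
          ring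
        · simp [h]
      calc ∑ ω ∈ Finset.univ.filter
            (fun ω : Fin s × V → V => ¬ (W / (8 * (α : ℝ)) ≤ ∑ v : V, M v ω)), q ω
          ≤ (2 / (∑ v : V, τ v)) *
            ∑ ω : Fin s × V → V, q ω * (∑ v : V, τ v * (if M v ω < τ v then 1 else 0)) := hstep
        _ = (2 / (∑ v : V, τ v)) * ∑ v : V, τ v *
            (∑ ω ∈ Finset.univ.filter (fun ω : Fin s × V → V => M v ω < τ v), q ω) := by
            rw [hswap]
        _ ≤ (2 / (∑ v : V, τ v)) * ∑ v : V, τ v * (3/4 : ℝ) ^ s := by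
            refine mul_le_mul_of_nonneg_left (Finset.sum_le_sum fun v _ => ?_) (by positivity)
            exact mul_le_mul_of_nonneg_left (hmarg v) (hτ0 v)
        _ = 2 * (3/4 : ℝ) ^ s := by
            rw [← Finset.sum_mul]
            field_simp
  have hlog : 2 * (3/4 : ℝ) ^ s ≤ δ := by
    have hlog43 : (1/4 : ℝ) ≤ Real.log (4/3) := by
      rw [Real.le_log_iff_exp_le (by norm_num : (0:ℝ) < 4/3)]
      have h1 : (3/4 : ℝ) ≤ Real.exp (-(1/4)) := by
        have := Real.add_one_le_exp (-(1/4 : ℝ))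
        linarith
      have h2 : Real.exp (1/4 : ℝ) = (Real.exp (-(1/4 : ℝ)))⁻¹ := by
        rw [← Real.exp_neg, neg_neg]
      rw [h2]
      have h3 : (0:ℝ) < 3/4 := by norm_num
      calc (Real.exp (-(1/4 : ℝ)))⁻¹ ≤ (3/4 : ℝ)⁻¹ := by
            apply inv_anti₀ h3 h1
        _ ≤ 4/3 := by norm_num
    have hpow : (3/4 : ℝ) ^ s = Real.exp (-((s : ℝ) * Real.log (4/3))) := by
      have h34 : (0:ℝ) < (3/4 : ℝ) ^ s := by positivity
      rw [← Real.exp_log h34, Real.log_pow]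
      congr 1
      have hlog34 : Real.log (3/4 : ℝ) = - Real.log (4/3 : ℝ) := by
        rw [show (3/4 : ℝ) = (4/3 : ℝ)⁻¹ by norm_num, Real.log_inv]
      rw [hlog34]
      push_cast
      ring
    have hδ2 : (0:ℝ) < δ / 2 := by linarith
    have hexp : Real.exp (-((s:ℝ) * Real.log (4/3))) ≤ δ / 2 := by
      rw [← Real.exp_log hδ2, Real.exp_le_exp]
      have hlogd : Real.log (δ/2) = Real.log δ - Real.log 2 :=
        Real.log_div (ne_of_gt hδ0) (by norm_num)
      have hlog1d : Real.log (1/δ) = - Real.log δ := by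
        rw [one_div, Real.log_inv]
      have hlog2 : Real.log 2 ≤ 1 := by
        have := Real.log_le_sub_one_of_pos (by norm_num : (0:ℝ) < 2)
        linarith
      have hmul : (10 * (Real.log (1/δ) + 1)) * (1/4) ≤ (s : ℝ) * Real.log (4/3) :=
        mul_le_mul hs hlog43 (by norm_num) (Nat.cast_nonneg s)
      rw [hlogd]
      rw [hlog1d] at hmul hL
      linarith
    calc 2 * (3/4 : ℝ) ^ s = 2 * Real.exp (-((s:ℝ) * Real.log (4/3))) := by rw [hpow]
      _ ≤ 2 * (δ/2) := by linarith
      _ = δ := by ring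
  set P : (Fin s × V → V) → Prop := fun ω =>
    (∀ c : Fin s × V, ω c ∈ G.neighborFinset c.2) ∧
      (W / (8 * (α : ℝ)) ≤ ∑ v : V, M v ω) with hPdef
  have hfinal : ∀ S : Set (Fin s × V → V), (∀ ω : Fin s × V → V, P ω → ω ∈ S) →
      ENNReal.ofReal (1 - δ) ≤ drawSpace G w s S := by
    intro S hS
    have hGsum : 1 - δ ≤ ∑ ω ∈ Finset.univ.filter P, q ω := by
      have hsplit := Finset.sum_filter_add_sum_filter_not Finset.univ P q
      have hnot : ∑ ω ∈ Finset.univ.filter (fun ω => ¬ P ω), q ω ≤ δ := by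
        have hsplit2 := Finset.sum_filter_add_sum_filter_not
          (Finset.univ.filter (fun ω => ¬ P ω))
          (fun ω : Fin s × V → V => ∀ c : Fin s × V, ω c ∈ G.neighborFinset c.2) q
        have hz : ∑ ω ∈ (Finset.univ.filter (fun ω => ¬ P ω)).filter
            (fun ω : Fin s × V → V => ¬ ∀ c : Fin s × V, ω c ∈ G.neighborFinset c.2),
            q ω = 0 := by
          refine Finset.sum_eq_zero fun ω hω => ?_
          rw [Finset.mem_filter] at hω
          obtain ⟨c, hc⟩ := not_forall.mp hω.2
          simp only [hqdef]
          exact Finset.prod_eq_zero (Finset.mem_univ c) (if_neg hc)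
        have hsub2 : (Finset.univ.filter (fun ω => ¬ P ω)).filter
            (fun ω : Fin s × V → V => ∀ c : Fin s × V, ω c ∈ G.neighborFinset c.2)
            ⊆ Finset.univ.filter
              (fun ω : Fin s × V → V => ¬ (W / (8 * (α:ℝ)) ≤ ∑ v : V, M v ω)) := by
          intro ω hω
          rw [Finset.mem_filter, Finset.mem_filter] at hω
          rw [Finset.mem_filter]
          refine ⟨Finset.mem_univ ω, ?_⟩
          intro hcon
          exact hω.1.2 ⟨hω.2, hcon⟩
        have hle2 : ∑ ω ∈ (Finset.univ.filter (fun ω => ¬ P ω)).filter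
            (fun ω : Fin s × V → V => ∀ c : Fin s × V, ω c ∈ G.neighborFinset c.2), q ω
            ≤ 2 * (3/4 : ℝ) ^ s :=
          le_trans (Finset.sum_le_sum_of_subset_of_nonneg hsub2 (fun ω _ _ => hq0 ω)) hbad
        linarith [hsplit2, hz, hle2, hlog]
      linarith [hq1, hsplit, hnot]
    calc ENNReal.ofReal (1 - δ) ≤ ENNReal.ofReal (∑ ω ∈ Finset.univ.filter P, q ω) :=
          ENNReal.ofReal_le_ofReal hGsum
      _ = ∑ ω ∈ Finset.univ.filter P, ENNReal.ofReal (q ω) :=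
          ENNReal.ofReal_sum_of_nonneg (fun ω _ => hq0 ω)
      _ ≤ ∑ ω ∈ Finset.univ.filter P,
            (∏ c : Fin s × V, ENNReal.ofReal (if ω c ∈ G.neighborFinset c.2 then
              w s(c.2, ω c) / ∑ x ∈ G.neighborFinset c.2, w s(c.2, x) else 0)) *
            Measure.dirac ω S := by
          refine Finset.sum_le_sum fun ω hω => ?_
          rw [Measure.dirac_apply_of_mem (hS ω (Finset.mem_filter.mp hω).2), mul_one]
          refine le_of_eq ?_
          simp only [hqdef]
          exact ENNReal.ofReal_prod_of_nonneg (fun c _ => by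
            split
            · exact div_nonneg (hw _) (le_of_lt (hwv c.2))
            · exact le_refl 0)
      _ ≤ ∑ ω : Fin s × V → V,
            (∏ c : Fin s × V, ENNReal.ofReal (if ω c ∈ G.neighborFinset c.2 then
              w s(c.2, ω c) / ∑ x ∈ G.neighborFinset c.2, w s(c.2, x) else 0)) *
            Measure.dirac ω S :=
          Finset.sum_le_sum_of_subset (Finset.filter_subset _ _)
      _ = drawSpace G w s S := by
          rw [drawSpace_repr G w s, Measure.finset_sum_apply]
          simp only [Measure.smul_apply, smul_eq_mul]
  refine hfinal _ ?_
  intro ω hP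
  simp only [Set.mem_setOf_eq]
  intro sel hsel
  obtain ⟨hsup, hbound⟩ := hP
  have h1 : ∀ v : V, M v ω ≤ w (sel v) := by
    intro v
    simp only [hMdef]
    exact Finset.sup'_le _ _ fun i _ => (hsel v).2 i
  have h2 : W / (8 * (α:ℝ)) ≤ ∑ v : V, w (sel v) :=
    le_trans hbound (Finset.sum_le_sum fun v _ => h1 v)
  have h3 : ∀ v : V, sel v ∈ G.edgeFinset.filter (fun e => ∃ v, sel v = e) := by
    intro v
    obtain ⟨i, hi⟩ := (hsel v).1
    rw [Finset.mem_filter]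
    refine ⟨?_, ⟨v, rfl⟩⟩
    rw [hi, SimpleGraph.mem_edgeFinset]
    exact (SimpleGraph.mem_edgeSet G).mpr
      ((SimpleGraph.mem_neighborFinset _ _ _).mp (hsup (i, v)))
  have h4 : ∑ v : V, w (sel v)
      ≤ 2 * ∑ e ∈ G.edgeFinset.filter (fun e => ∃ v, sel v = e), w e := by
    rw [← Finset.sum_fiberwise_of_maps_to (fun v (_ : v ∈ Finset.univ) => h3 v)
      (fun v => w (sel v))]
    rw [Finset.mul_sum]
    refine Finset.sum_le_sum fun e he => ?_
    rw [Finset.sum_congr rfl (fun v hv => by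
      rw [(Finset.mem_filter.mp hv).2] :
      ∀ v ∈ Finset.univ.filter (fun v => sel v = e), w (sel v) = w e)]
    rw [Finset.sum_const, nsmul_eq_mul]
    refine mul_le_mul_of_nonneg_right ?_ (hw e)
    obtain ⟨a, b, rfl⟩ : ∃ a b, e = s(a, b) := by
      induction e using Sym2.inductionOn with
      | hf a b => exact ⟨a, b, rfl⟩
    have hss : Finset.univ.filter (fun v => sel v = s(a, b)) ⊆ {a, b} := by
      intro v hv
      have hveq : sel v = s(a, b) := (Finset.mem_filter.mp hv).2
      obtain ⟨i, hi⟩ := (hsel v).1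
      have hvmem : v ∈ sel v := by
        rw [hi]
        exact Sym2.mem_mk_left _ _
      rw [hveq] at hvmem
      rcases Sym2.mem_iff.mp hvmem with rfl | rfl
      · exact Finset.mem_insert_self _ _
      · exact Finset.mem_insert_of_mem (Finset.mem_singleton_self _)
    have hcc : (Finset.univ.filter (fun v => sel v = s(a, b))).card ≤ ({a, b} : Finset V).card :=
      Finset.card_le_card hss
    have hcard2 : ({a, b} : Finset V).card ≤ 2 := by
      refine le_trans (Finset.card_insert_le _ _) ?_
      simp
    exact_mod_cast le_trans hcc hcard2
  have h5 : 0 ≤ ∑ e ∈ G.edgeFinset.filter (fun e => ∃ v, sel v = e), w e :=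
    Finset.sum_nonneg fun e _ => hw e
  have h6 : W / (16 * (α:ℝ)) = W / (8 * (α:ℝ)) / 2 := by
    rw [div_div]
    ring_nf
  rw [h6]
  linarith
end

section
/- Let F be a directed pseudo-forest (each vertex has out-degree at most 1) with a proper 3-coloring χ of its vertices. Mark edges by the rule: each vertex u with χ(u)=1 marks either its single outgoing edge (if its weight is at least the total weight of u's incoming edges) or else all its incoming edges; each vertex u with χ(u)=2 applies the same rule restricted to edges whose other endpoint is colored 3. Then the subgraph of marked edges contains no cycle, i.e., it is a forest. -/
open SimpleGraph

/-- Any non-nil walk ending at `u` contains a last edge `s(c, u)`. -/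
lemma exists_last_edge {V : Type} {G : SimpleGraph V} {x u : V}
    (wlk : G.Walk x u) (hw : ¬ wlk.Nil) :
    ∃ c, c ∈ wlk.support ∧ s(c, u) ∈ wlk.edges := by
  induction wlk with
  | nil => simp at hw
  | @cons x y u h q ih =>
    by_cases hq : q.Nil
    · have hyu : y = u := hq.eq
      subst hyu
      exact ⟨x, by simp, by simp⟩
    · obtain ⟨c, hc, he⟩ := ih hq
      exact ⟨c, by simp [hc], by simp [he]⟩

lemma end_mem_support_tail {V : Type} {G : SimpleGraph V} {a : V}
    (p : G.Walk a a) (h : ¬ p.Nil) : a ∈ p.support.tail := by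
  cases p with
  | nil => simp at h
  | cons h' q => simp [q.end_mem_support]



/-- Total weight of the incoming edges of `v` in the functional digraph `out`
(the edge with tail `x` has weight `w x`). -/
noncomputable def inW {V : Type} [Fintype V] [DecidableEq V]
    (out : V → Option V) (w : V → ℝ) (v : V) : ℝ :=
  ∑ x ∈ Finset.univ.filter (fun x => out x = some v), w x

/-- Total weight of the incoming edges of `v` whose tail is colored `3`. -/
noncomputable def inW3 {V : Type} [Fintype V] [DecidableEq V]
    (out : V → Option V) (w : V → ℝ) (χ : V → ℕ) (v : V) : ℝ :=
  ∑ x ∈ Finset.univ.filter (fun x => out x = some v ∧ χ x = 3), w x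

/-- The directed edge `(u,v)` (with `out u = some v`, weight `w u`) is marked:
a vertex colored `1` marks its outgoing edge if its weight is at least the
total weight of its incoming edges, and otherwise marks all its incoming
edges; a vertex colored `2` applies the same rule restricted to edges whose
other endpoint is colored `3`. -/
def Marked {V : Type} [Fintype V] [DecidableEq V]
    (out : V → Option V) (w : V → ℝ) (χ : V → ℕ) (u v : V) : Prop :=
  (χ u = 1 ∧ inW out w u ≤ w u) ∨
  (χ v = 1 ∧ ¬ ((out v).isSome = true ∧ inW out w v ≤ w v)) ∨
  (χ u = 2 ∧ χ v = 3 ∧ inW3 out w χ u ≤ w u) ∨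
  (χ v = 2 ∧ χ u = 3 ∧
    ¬ ∃ z, out v = some z ∧ χ z = 3 ∧ inW3 out w χ v ≤ w v)

/-- In a directed pseudo-forest with a proper 3-coloring, the subgraph of
marked edges is acyclic, i.e. a forest. -/
theorem marked_subgraph_isAcyclic {V : Type} [Fintype V] [DecidableEq V]
    (out : V → Option V) (w : V → ℝ) (χ : V → ℕ)
    (hχ : ∀ v, χ v = 1 ∨ χ v = 2 ∨ χ v = 3)
    (hproper : ∀ u v, out u = some v → χ u ≠ χ v) :
    (SimpleGraph.fromEdgeSet
      {e | ∃ u v, e = s(u, v) ∧ out u = some v ∧ Marked out w χ u v}).IsAcyclic := by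
  classical
  intro a p hp
  -- every edge of the walk comes from the marked edge set
  have hedge : ∀ e ∈ p.edges, ∃ u v, e = s(u, v) ∧ out u = some v ∧ Marked out w χ u v := by
    intro e he
    have h1 := p.edges_subset_edgeSet he
    rw [SimpleGraph.edgeSet_fromEdgeSet] at h1
    exact h1.1
  -- choose a canonical orientation (tail, head) of each edge of the walk
  have hchoice : ∀ e : {e : Sym2 V // e ∈ p.edges.toFinset}, ∃ uv : V × V,
      (e : Sym2 V) = s(uv.1, uv.2) ∧ out uv.1 = some uv.2 ∧ Marked out w χ uv.1 uv.2 := by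
    rintro ⟨e, he⟩
    obtain ⟨u, v, h1, h2, h3⟩ := hedge e (List.mem_toFinset.1 he)
    exact ⟨(u, v), h1, h2, h3⟩
  choose F hF1 hF2 hF3 using hchoice
  have hFmem : ∀ e : {e : Sym2 V // e ∈ p.edges.toFinset}, (F e).1 ∈ p.support.toFinset := by
    intro e
    have h := List.mem_toFinset.1 e.2
    rw [hF1 e] at h
    exact List.mem_toFinset.2 (p.fst_mem_support_of_mem_edges h)
  set f : {e : Sym2 V // e ∈ p.edges.toFinset} → {u : V // u ∈ p.support.toFinset} :=
    fun e => ⟨(F e).1, hFmem e⟩ with hfdef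
  -- `f` is injective: the tail determines the head via `out`
  have finj : Function.Injective f := by
    intro e1 e2 h
    have h1 : (F e1).1 = (F e2).1 := congrArg Subtype.val h
    have h2 : some (F e1).2 = some (F e2).2 := by
      rw [← hF2 e1, h1, hF2 e2]
    have h3 : (F e1).2 = (F e2).2 := Option.some_injective _ h2
    apply Subtype.ext
    rw [hF1 e1, hF1 e2, h1, h3]
  -- counting: there are as many edges as vertices on the cycle
  have hEcard : p.edges.toFinset.card = p.length := by
    rw [List.toFinset_card_of_nodup hp.isCircuit.isTrail.edges_nodup, p.length_edges]
  have hmema : a ∈ p.support.tail := end_mem_support_tail p hp.not_nil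
  have hScard : p.support.toFinset.card = p.length := by
    have h1 : p.support.toFinset = p.support.tail.toFinset := by
      conv_lhs => rw [p.support_eq_cons]
      rw [List.toFinset_cons, Finset.insert_eq_self.2 (List.mem_toFinset.2 hmema)]
    rw [h1, List.toFinset_card_of_nodup hp.support_nodup, List.length_tail, p.length_support]
    omega
  have fbij : Function.Bijective f := by
    rw [Fintype.bijective_iff_injective_and_card]
    refine ⟨finj, ?_⟩
    rw [Fintype.card_coe, Fintype.card_coe, hEcard, hScard]
  -- key fact A : every vertex of the cycle is the tail of a marked walk edge
  have keyA : ∀ u ∈ p.support, ∃ v, out u = some v ∧ Marked out w χ u v ∧ s(u, v) ∈ p.edges := by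
    intro u hu
    obtain ⟨e, he⟩ := fbij.2 ⟨u, List.mem_toFinset.2 hu⟩
    have h1 : (F e).1 = u := congrArg Subtype.val he
    refine ⟨(F e).2, h1 ▸ hF2 e, h1 ▸ hF3 e, ?_⟩
    have h2 := hF1 e
    rw [h1] at h2
    rw [← h2]
    exact List.mem_toFinset.1 e.2
  -- key fact B : every vertex of the cycle is the head of a marked walk edge
  have keyB : ∀ u ∈ p.support, ∃ t, t ∈ p.support ∧ out t = some u ∧ Marked out w χ t u := by
    intro u hu
    have hq : (p.rotate u hu).IsCycle := hp.rotate hu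
    have hmemrot : ∀ e, e ∈ (p.rotate u hu).edges ↔ e ∈ p.edges :=
      fun e => (p.rotate_edges u hu).mem_iff
    obtain ⟨b, hadj, q', hcons⟩ := (SimpleGraph.Walk.not_nil_iff).1 hq.not_nil
    have he1 : s(u, b) ∈ p.edges := by
      rw [← hmemrot, hcons]; simp
    have hq'nil : ¬ q'.Nil := SimpleGraph.Walk.not_nil_of_ne hadj.ne'
    obtain ⟨c, hcsup, he2'⟩ := exists_last_edge q' hq'nil
    have he2 : s(c, u) ∈ p.edges := by
      rw [← hmemrot, hcons]; simp [he2']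
    have htrail := hq.isCircuit.isTrail
    rw [hcons] at htrail
    have hnotin : s(u, b) ∉ q'.edges :=
      ((SimpleGraph.Walk.isTrail_cons hadj q').1 htrail).2
    have hne12 : s(u, b) ≠ s(c, u) := fun h => hnotin (h ▸ he2')
    set e1 : {e : Sym2 V // e ∈ p.edges.toFinset} := ⟨s(u, b), List.mem_toFinset.2 he1⟩
    set e2 : {e : Sym2 V // e ∈ p.edges.toFinset} := ⟨s(c, u), List.mem_toFinset.2 he2⟩
    have hfe : (F e1).1 ≠ (F e2).1 := by
      intro h
      exact hne12 (congrArg Subtype.val (finj (Subtype.ext h : f e1 = f e2)))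
    by_cases hcase : (F e1).1 = u
    · -- then the tail of e2 is not u, so e2 is directed into u
      have ht2 : (F e2).1 ≠ u := fun h => hfe (hcase.trans h.symm)
      have heq : s(c, u) = s((F e2).1, (F e2).2) := hF1 e2
      rcases Sym2.eq_iff.1 heq with ⟨h1, h2⟩ | ⟨h1, h2⟩
      · refine ⟨(F e2).1, ?_, ?_, ?_⟩
        · exact p.fst_mem_support_of_mem_edges (heq ▸ he2)
        · rw [h2]; exact hF2 e2
        · rw [h2]; exact hF3 e2
      · exact absurd h2.symm ht2
    · -- the tail of e1 is not u, so e1 is directed into u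
      have heq : s(u, b) = s((F e1).1, (F e1).2) := hF1 e1
      rcases Sym2.eq_iff.1 heq with ⟨h1, h2⟩ | ⟨h1, h2⟩
      · exact absurd h1.symm hcase
      · refine ⟨(F e1).1, ?_, ?_, ?_⟩
        · exact p.fst_mem_support_of_mem_edges (heq ▸ he1)
        · rw [h1]; exact hF2 e1
        · rw [h1]; exact hF3 e1
  -- no vertex of the cycle is colored 1
  have hno1 : ∀ u ∈ p.support, χ u ≠ 1 := by
    intro u hu h1
    obtain ⟨v, hv, hmv, _⟩ := keyA u hu
    have hvne : χ v ≠ 1 := fun h => hproper u v hv (h1.trans h.symm)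
    have hw1 : inW out w u ≤ w u := by
      rcases hmv with ⟨_, h⟩ | ⟨h, _⟩ | ⟨h2, _, _⟩ | ⟨_, h3, _⟩
      · exact h
      · exact absurd h hvne
      · omega
      · omega
    obtain ⟨t, ht, hto, hmt⟩ := keyB u hu
    have htne : χ t ≠ 1 := fun h => hproper t u hto (by rw [h, h1])
    rcases hmt with ⟨h, _⟩ | ⟨_, h⟩ | ⟨_, h, _⟩ | ⟨h, _, _⟩
    · exact htne h
    · exact h ⟨by rw [hv]; rfl, hw1⟩
    · omega
    · omega
  have hcolors : ∀ u ∈ p.support, χ u = 2 ∨ χ u = 3 := fun u hu =>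
    (hχ u).resolve_left (hno1 u hu)
  -- the cycle has an edge; one of its endpoints is colored 2
  have hlen := hp.three_le_length
  have hnonnil : p.edges ≠ [] := by
    intro h
    have h2 := p.length_edges
    rw [h] at h2
    simp at h2
    omega
  obtain ⟨e, he⟩ := List.exists_mem_of_ne_nil _ hnonnil
  obtain ⟨x, y, hexy, hxy, _⟩ := hedge e he
  have hx : x ∈ p.support := p.fst_mem_support_of_mem_edges (hexy ▸ he)
  have hy : y ∈ p.support := p.snd_mem_support_of_mem_edges (hexy ▸ he)
  obtain ⟨u, hu, hu2⟩ : ∃ u ∈ p.support, χ u = 2 := by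
    rcases hcolors x hx with h | h
    · exact ⟨x, hx, h⟩
    · rcases hcolors y hy with h' | h'
      · exact ⟨y, hy, h'⟩
      · exact absurd (h.trans h'.symm) (hproper x y hxy)
  -- the outgoing marked edge of `u` goes to a vertex colored 3 and satisfies inW3 ≤ w
  obtain ⟨v, hv, hmv, hev⟩ := keyA u hu
  have hvsup : v ∈ p.support := p.snd_mem_support_of_mem_edges hev
  have hv3 : χ v = 3 := by
    rcases hcolors v hvsup with h | h
    · exact absurd (hu2.trans h.symm) (hproper u v hv)
    · exact h
  have h3 : inW3 out w χ u ≤ w u := by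
    rcases hmv with ⟨h, _⟩ | ⟨h, _⟩ | ⟨_, _, h⟩ | ⟨h, _, _⟩
    · omega
    · omega
    · exact h
    · omega
  -- the incoming marked edge of `u` comes from a vertex colored 3 : contradiction
  obtain ⟨t, ht, hto, hmt⟩ := keyB u hu
  have ht3 : χ t = 3 := by
    rcases hcolors t ht with h | h
    · exact absurd (h.trans hu2.symm) (hproper t u hto)
    · exact h
  rcases hmt with ⟨h, _⟩ | ⟨h, _⟩ | ⟨h, _, _⟩ | ⟨_, _, h⟩
  · omega
  · omega
  · omega
  · exact h ⟨v, hv, hv3, h3⟩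
end

section
/- In the shallow-subtree selection step applied to a weighted forest F (from Czygrinow–Hańćkowiak–Wawrzyniak), the set T of subtrees induced by the marked edges satisfies w(T) ≥ w(F)/2, and every tree in T has height at most 10. Consequently, contracting in each tree T ∈ T either all its even-level-to-odd-level edges or all remaining edges (whichever set is heavier) contracts edges of total weight at least w(F)/4. -/
section Aux
variable {V : Type} [Fintype V] [DecidableEq V]
  (parent : V → Option V) (w : V → ℝ) (χ : V → ℕ)

lemma inW_nonneg (hw : ∀ v, 0 ≤ w v) (v : V) : 0 ≤ inW parent w v :=
  Finset.sum_nonneg fun x _ => hw x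

lemma inW3_nonneg (hw : ∀ v, 0 ≤ w v) (v : V) : 0 ≤ inW3 parent w χ v :=
  Finset.sum_nonneg fun x _ => hw x

variable {parent w χ}

/-- (i) if the lower edge is marked, the upper edge is not marked via cond1. -/
lemma step_not1 (hproper : ∀ u v, parent u = some v → χ u ≠ χ v) {a b c : V} (hab : parent a = some b) (hbc : parent b = some c)
    (mab : Marked parent w χ a b) : ¬ (χ b = 1 ∧ inW parent w b ≤ w b) := by
  rintro ⟨hb1, hble⟩
  rcases mab with ⟨ha1, _⟩ | ⟨_, hn⟩ | ⟨_, hb3, _⟩ | ⟨hb2, _, _⟩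
  · exact hproper a b hab (ha1.trans hb1.symm)
  · exact hn ⟨by rw [hbc]; rfl, hble⟩
  · omega
  · omega

/-- (ii) cond2 on an edge kills the next edge. -/
lemma step_2kills (hproper : ∀ u v, parent u = some v → χ u ≠ χ v) {a b c : V} (hab : parent a = some b) (hbc : parent b = some c)
    (mab : χ b = 1 ∧ ¬ ((parent b).isSome = true ∧ inW parent w b ≤ w b)) :
    ¬ Marked parent w χ b c := by
  rintro (⟨hb1', hle⟩ | ⟨hc1, _⟩ | ⟨hb2, _, _⟩ | ⟨_, hb3, _⟩)
  · exact mab.2 ⟨by rw [hbc]; rfl, hle⟩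
  · exact hproper b c hbc (mab.1.trans hc1.symm)
  · omega
  · omega

/-- (iii) cond3 on the upper edge forces cond1 on the lower edge. -/
lemma step_3to1 (hproper : ∀ u v, parent u = some v → χ u ≠ χ v) {a b c : V} (hab : parent a = some b) (hbc : parent b = some c)
    (mab : Marked parent w χ a b)
    (h3 : χ b = 2 ∧ χ c = 3 ∧ inW3 parent w χ b ≤ w b) :
    χ a = 1 ∧ inW parent w a ≤ w a := by
  rcases mab with h | ⟨hb1, _⟩ | ⟨_, hb3, _⟩ | ⟨_, _, hn⟩
  · exact h
  · omega
  · omega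
  · exact absurd ⟨c, hbc, h3.2.1, h3.2.2⟩ hn

/-- (iv) cond4 on an edge forces cond2 on the next edge. -/
lemma step_4to2 (hproper : ∀ u v, parent u = some v → χ u ≠ χ v) {a b c : V} (hab : parent a = some b) (hbc : parent b = some c)
    (m4 : χ b = 2 ∧ χ a = 3 ∧
      ¬ ∃ z, parent b = some z ∧ χ z = 3 ∧ inW3 parent w χ b ≤ w b)
    (mbc : Marked parent w χ b c) :
    χ c = 1 ∧ ¬ ((parent c).isSome = true ∧ inW parent w c ≤ w c) := by
  rcases mbc with ⟨hb1, _⟩ | h | ⟨_, hc3, hle⟩ | ⟨_, hb3, _⟩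
  · omega
  · exact h
  · exact absurd ⟨c, hbc, hc3, hle⟩ m4.2.2
  · omega

/-- No chain of five consecutive marked edges. -/
lemma no_five_chain (hproper : ∀ u v, parent u = some v → χ u ≠ χ v) {u0 u1 u2 u3 u4 u5 : V}
    (h1 : parent u0 = some u1) (m1 : Marked parent w χ u0 u1)
    (h2 : parent u1 = some u2) (m2 : Marked parent w χ u1 u2)
    (h3 : parent u2 = some u3) (m3 : Marked parent w χ u2 u3)
    (h4 : parent u3 = some u4) (m4 : Marked parent w χ u3 u4)
    (h5 : parent u4 = some u5) (m5 : Marked parent w χ u4 u5) : False := by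
  rcases m2 with c1 | c2 | c3 | c4
  · exact step_not1 hproper h1 h2 m1 c1
  · exact step_2kills hproper h2 h3 c2 m3
  · -- m2 is cond3 : χ u1 = 2 ∧ χ u2 = 3 ∧ ...
    rcases m3 with d1 | d2 | d3 | d4
    · exact step_not1 hproper h2 h3 (Or.inr (Or.inr (Or.inl c3))) d1
    · exact step_2kills hproper h3 h4 d2 m4
    · omega
    · exact step_2kills hproper h4 h5 (step_4to2 hproper h3 h4 d4 m4) m5
  · exact step_2kills hproper h3 h4 (step_4to2 hproper h2 h3 c4 m3) m4

end Aux

open Classical in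
noncomputable def resp {V : Type} (parent : V → Option V) (χ : V → ℕ) (u : V) : V :=
  match parent u with
  | none => u
  | some v => if χ u = 1 then u else if χ v = 1 then v
      else if χ u = 2 then u else v

section Aux2
variable {V : Type} [Fintype V] [DecidableEq V]

lemma resp_of_parent {parent : V → Option V} {χ : V → ℕ} {u v : V}
    (h : parent u = some v) :
    resp parent χ u = if χ u = 1 then u else if χ v = 1 then v
      else if χ u = 2 then u else v := by
  simp only [resp, h]

lemma no_self_loop {parent : V → Option V}
    (hforest : ∀ v, ¬ Relation.TransGen (fun a b => parent a = some b) v v)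
    (z : V) : parent z ≠ some z := fun h => hforest z (Relation.TransGen.single h)

open Classical in
lemma fiber_bound (parent : V → Option V) (w : V → ℝ) (hw : ∀ v, 0 ≤ w v)
    (χ : V → ℕ) (hχ : ∀ v, χ v = 1 ∨ χ v = 2 ∨ χ v = 3)
    (hproper : ∀ u v, parent u = some v → χ u ≠ χ v)
    (hforest : ∀ v, ¬ Relation.TransGen (fun a b => parent a = some b) v v)
    (z : V) :
    ∑ u ∈ (Finset.univ.filter (fun u => (parent u).isSome)).filter
        (fun u => resp parent χ u = z), w u ≤
    2 * ∑ u ∈ (Finset.univ.filter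
        (fun u => ∃ v, parent u = some v ∧ Marked parent w χ u v)).filter
        (fun u => resp parent χ u = z), w u := by
  classical
  set Sall := (Finset.univ.filter (fun u : V => (parent u).isSome)).filter
      (fun u => resp parent χ u = z) with hSall
  set Smk := (Finset.univ.filter
      (fun u : V => ∃ v, parent u = some v ∧ Marked parent w χ u v)).filter
      (fun u => resp parent χ u = z) with hSmk
  have hmk_nonneg : (0:ℝ) ≤ ∑ u ∈ Smk, w u := Finset.sum_nonneg fun x _ => hw x
  have hmem_all : ∀ u, u ∈ Sall ↔ ((parent u).isSome ∧ resp parent χ u = z) := by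
    intro u; simp [hSall, Finset.mem_filter]
  have hmem_mk : ∀ u, u ∈ Smk ↔
      ((∃ v, parent u = some v ∧ Marked parent w χ u v) ∧ resp parent χ u = z) := by
    intro u; simp [hSmk, Finset.mem_filter]
  rcases hχ z with hz1 | hz2 | hz3
  · -- χ z = 1
    have hchar : ∀ u ∈ Sall, parent u = some z ∨ (u = z ∧ (parent z).isSome) := by
      intro u hu
      obtain ⟨hs, hr⟩ := (hmem_all u).mp hu
      obtain ⟨v, hv⟩ := Option.isSome_iff_exists.mp hs
      rw [resp_of_parent hv] at hr
      split_ifs at hr with h1 h2 h3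
      · right; exact ⟨hr, hr ▸ hs⟩
      · left; rwa [hr] at hv
      · exfalso; rw [hr] at h3; omega
      · exfalso; subst hr; exact h2 hz1
    by_cases hs : (parent z).isSome
    · obtain ⟨y, hy⟩ := Option.isSome_iff_exists.mp hs
      have hub : ∑ u ∈ Sall, w u ≤ w z + inW parent w z := by
        have hsub : Sall ⊆ insert z (Finset.univ.filter (fun x : V => parent x = some z)) := by
          intro u hu
          rcases hchar u hu with h | h
          · exact Finset.mem_insert_of_mem (by simp [h])
          · rw [h.1]; exact Finset.mem_insert_self z _
        calc ∑ u ∈ Sall, w u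
            ≤ ∑ u ∈ insert z (Finset.univ.filter (fun x : V => parent x = some z)), w u :=
              Finset.sum_le_sum_of_subset_of_nonneg hsub (fun x _ _ => hw x)
          _ = w z + inW parent w z := by
              rw [Finset.sum_insert (by simp [no_self_loop hforest z])]; rfl
      by_cases hle : inW parent w z ≤ w z
      · have hzmk : z ∈ Smk := by
          rw [hmem_mk]
          constructor
          · exact ⟨y, hy, Or.inl ⟨hz1, hle⟩⟩
          · rw [resp_of_parent hy, if_pos hz1]
        have hlb : w z ≤ ∑ u ∈ Smk, w u :=
          Finset.single_le_sum (fun x _ => hw x) hzmk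
        linarith
      · have hsub : Finset.univ.filter (fun x : V => parent x = some z) ⊆ Smk := by
          intro u hu
          simp only [Finset.mem_filter, Finset.mem_univ, true_and] at hu
          rw [hmem_mk]
          refine ⟨⟨z, hu, Or.inr (Or.inl ⟨hz1, fun hc => hle hc.2⟩)⟩, ?_⟩
          rw [resp_of_parent hu, if_neg (fun hc => hproper u z hu (by omega)), if_pos hz1]
        have hlb : inW parent w z ≤ ∑ u ∈ Smk, w u :=
          Finset.sum_le_sum_of_subset_of_nonneg hsub (fun x _ _ => hw x)
        push_neg at hle
        linarith
    · have hub : ∑ u ∈ Sall, w u ≤ inW parent w z := by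
        have hsub : Sall ⊆ Finset.univ.filter (fun x : V => parent x = some z) := by
          intro u hu
          rcases hchar u hu with h | h
          · simp [h]
          · exact absurd h.2 hs
        exact Finset.sum_le_sum_of_subset_of_nonneg hsub (fun x _ _ => hw x)
      have hsub : Finset.univ.filter (fun x : V => parent x = some z) ⊆ Smk := by
        intro u hu
        simp only [Finset.mem_filter, Finset.mem_univ, true_and] at hu
        rw [hmem_mk]
        refine ⟨⟨z, hu, Or.inr (Or.inl ⟨hz1, fun hc => hs hc.1⟩)⟩, ?_⟩
        rw [resp_of_parent hu, if_neg (fun hc => hproper u z hu (by omega)), if_pos hz1]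
      have hlb : inW parent w z ≤ ∑ u ∈ Smk, w u :=
        Finset.sum_le_sum_of_subset_of_nonneg hsub (fun x _ _ => hw x)
      have : (0:ℝ) ≤ inW parent w z := inW_nonneg parent w hw z
      linarith
  · -- χ z = 2
    have hchar : ∀ u ∈ Sall, (parent u = some z ∧ χ u = 3) ∨
        (u = z ∧ ∃ v, parent z = some v ∧ χ v = 3) := by
      intro u hu
      obtain ⟨hs, hr⟩ := (hmem_all u).mp hu
      obtain ⟨v, hv⟩ := Option.isSome_iff_exists.mp hs
      rw [resp_of_parent hv] at hr
      split_ifs at hr with h1 h2 h3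
      · exfalso; rw [hr] at h1; omega
      · exfalso; rw [hr] at h2; omega
      · subst hr
        refine Or.inr ⟨rfl, v, hv, ?_⟩
        have := hproper u v hv
        rcases hχ v with h | h | h
        · exact absurd h h2
        · omega
        · exact h
      · subst hr
        refine Or.inl ⟨hv, ?_⟩
        rcases hχ u with h | h | h
        · exact absurd h h1
        · exact absurd h h3
        · exact h
    have hin3 : inW3 parent w χ z =
        ∑ u ∈ Finset.univ.filter (fun x : V => parent x = some z ∧ χ x = 3), w u := rfl
    by_cases hs3 : ∃ v, parent z = some v ∧ χ v = 3
    · obtain ⟨y, hy, hy3⟩ := hs3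
      have hub : ∑ u ∈ Sall, w u ≤ w z + inW3 parent w χ z := by
        have hsub : Sall ⊆ insert z
            (Finset.univ.filter (fun x : V => parent x = some z ∧ χ x = 3)) := by
          intro u hu
          rcases hchar u hu with h | h
          · exact Finset.mem_insert_of_mem (by simp [h.1, h.2])
          · rw [h.1]; exact Finset.mem_insert_self z _
        calc ∑ u ∈ Sall, w u
            ≤ ∑ u ∈ insert z (Finset.univ.filter (fun x : V => parent x = some z ∧ χ x = 3)),
              w u := Finset.sum_le_sum_of_subset_of_nonneg hsub (fun x _ _ => hw x)
          _ = w z + inW3 parent w χ z := by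
              rw [Finset.sum_insert (by simp [no_self_loop hforest z])]; rfl
      by_cases hle : inW3 parent w χ z ≤ w z
      · have hzmk : z ∈ Smk := by
          rw [hmem_mk]
          constructor
          · exact ⟨y, hy, Or.inr (Or.inr (Or.inl ⟨hz2, hy3, hle⟩))⟩
          · rw [resp_of_parent hy, if_neg (by omega), if_neg (by omega), if_pos hz2]
        have hlb : w z ≤ ∑ u ∈ Smk, w u :=
          Finset.single_le_sum (fun x _ => hw x) hzmk
        linarith
      · have hsub : Finset.univ.filter (fun x : V => parent x = some z ∧ χ x = 3) ⊆ Smk := by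
          intro u hu
          simp only [Finset.mem_filter, Finset.mem_univ, true_and] at hu
          rw [hmem_mk]
          refine ⟨⟨z, hu.1, Or.inr (Or.inr (Or.inr ⟨hz2, hu.2, ?_⟩))⟩, ?_⟩
          · rintro ⟨t, ht, ht3, hle'⟩; exact hle hle'
          · rw [resp_of_parent hu.1, if_neg (by omega), if_neg (by omega), if_neg (by omega)]
        have hlb : inW3 parent w χ z ≤ ∑ u ∈ Smk, w u :=
          Finset.sum_le_sum_of_subset_of_nonneg hsub (fun x _ _ => hw x)
        push_neg at hle
        linarith
    · have hub : ∑ u ∈ Sall, w u ≤ inW3 parent w χ z := by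
        have hsub : Sall ⊆ Finset.univ.filter (fun x : V => parent x = some z ∧ χ x = 3) := by
          intro u hu
          rcases hchar u hu with h | h
          · simp [h.1, h.2]
          · exact absurd h.2 hs3
        exact Finset.sum_le_sum_of_subset_of_nonneg hsub (fun x _ _ => hw x)
      have hsub : Finset.univ.filter (fun x : V => parent x = some z ∧ χ x = 3) ⊆ Smk := by
        intro u hu
        simp only [Finset.mem_filter, Finset.mem_univ, true_and] at hu
        rw [hmem_mk]
        refine ⟨⟨z, hu.1, Or.inr (Or.inr (Or.inr ⟨hz2, hu.2, ?_⟩))⟩, ?_⟩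
        · rintro ⟨t, ht, ht3, hle'⟩; exact hs3 ⟨t, ht, ht3⟩
        · rw [resp_of_parent hu.1, if_neg (by omega), if_neg (by omega), if_neg (by omega)]
      have hlb : inW3 parent w χ z ≤ ∑ u ∈ Smk, w u :=
        Finset.sum_le_sum_of_subset_of_nonneg hsub (fun x _ _ => hw x)
      have : (0:ℝ) ≤ inW3 parent w χ z := inW3_nonneg parent w χ hw z
      linarith
  · -- χ z = 3 : empty fiber
    have hempty : Sall = ∅ := by
      rw [Finset.eq_empty_iff_forall_notMem]
      intro u hu
      obtain ⟨hs, hr⟩ := (hmem_all u).mp hu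
      obtain ⟨v, hv⟩ := Option.isSome_iff_exists.mp hs
      rw [resp_of_parent hv] at hr
      split_ifs at hr with h1 h2 h3
      · rw [hr] at h1; omega
      · rw [hr] at h2; omega
      · rw [hr] at h3; omega
      · rw [hr] at hv
        have hu3 : χ u = 3 := by rcases hχ u with h | h | h <;> omega
        exact hproper u z hv (by omega)
    rw [hempty]
    simpa using hmk_nonneg
end Aux2

section Aux3
variable {V : Type} [Fintype V] [DecidableEq V]

lemma dep_le_four (parent : V → Option V) (w : V → ℝ) (χ : V → ℕ)
    (hproper : ∀ u v, parent u = some v → χ u ≠ χ v)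
    (dep : V → ℕ)
    (hdep1 : ∀ u v, parent u = some v → Marked parent w χ u v → dep u = dep v + 1)
    (hdep0 : ∀ u, (∀ v, parent u = some v → ¬ Marked parent w χ u v) → dep u = 0)
    (u : V) : dep u ≤ 4 := by
  have step : ∀ x : V, dep x ≠ 0 →
      ∃ y, parent x = some y ∧ Marked parent w χ x y ∧ dep x = dep y + 1 := by
    intro x hx
    by_contra hc
    exact hx (hdep0 x (fun v hv hm => absurd ⟨v, hv, hm, hdep1 x v hv hm⟩ hc))
  by_contra hcon
  push_neg at hcon
  obtain ⟨v1, h1, m1, e1⟩ := step u (by omega)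
  obtain ⟨v2, h2, m2, e2⟩ := step v1 (by omega)
  obtain ⟨v3, h3, m3, e3⟩ := step v2 (by omega)
  obtain ⟨v4, h4, m4, e4⟩ := step v3 (by omega)
  obtain ⟨v5, h5, m5, e5⟩ := step v4 (by omega)
  exact no_five_chain hproper h1 m1 h2 m2 h3 m3 h4 m4 h5 m5

end Aux3

open Classical in
/-- The shallow-subtree selection step (Czygrinow–Hańćkowiak–Wawrzyniak) on a
weighted rooted forest `parent` with edge weights `w` and a proper 3-coloring
`χ`: the marked edges have total weight at least `w(F)/2`; each marked subtree
has height at most `10` (`dep` is the depth in the marked subtree, `rt` its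
root); and contracting, in each marked subtree, the heavier of the class of
even-to-odd-level edges and the class of the remaining edges, contracts edges
of total weight at least `w(F)/4`. -/
theorem shallow_subtree_selection {V : Type} [Fintype V] [DecidableEq V]
    (parent : V → Option V) (w : V → ℝ) (hw : ∀ v, 0 ≤ w v)
    (χ : V → ℕ) (hχ : ∀ v, χ v = 1 ∨ χ v = 2 ∨ χ v = 3)
    (hproper : ∀ u v, parent u = some v → χ u ≠ χ v)
    (hforest : ∀ v, ¬ Relation.TransGen (fun a b => parent a = some b) v v)
    (dep : V → ℕ)
    (hdep1 : ∀ u v, parent u = some v → Marked parent w χ u v →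
      dep u = dep v + 1)
    (hdep0 : ∀ u, (∀ v, parent u = some v → ¬ Marked parent w χ u v) →
      dep u = 0)
    (rt : V → V)
    (hrt1 : ∀ u v, parent u = some v → Marked parent w χ u v → rt u = rt v)
    (hrt0 : ∀ u, (∀ v, parent u = some v → ¬ Marked parent w χ u v) →
      rt u = u) :
    ((∑ u ∈ Finset.univ.filter (fun u => (parent u).isSome), w u) / 2 ≤
      ∑ u ∈ Finset.univ.filter
          (fun u => ∃ v, parent u = some v ∧ Marked parent w χ u v), w u) ∧
    (∀ u, dep u ≤ 10) ∧
    ((∑ u ∈ Finset.univ.filter (fun u => (parent u).isSome), w u) / 4 ≤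
      ∑ r : V, max
        (∑ u ∈ Finset.univ.filter (fun u =>
            (∃ v, parent u = some v ∧ Marked parent w χ u v) ∧
            rt u = r ∧ Even (dep u)), w u)
        (∑ u ∈ Finset.univ.filter (fun u =>
            (∃ v, parent u = some v ∧ Marked parent w χ u v) ∧
            rt u = r ∧ ¬ Even (dep u)), w u)) := by
  have key : (∑ u ∈ Finset.univ.filter (fun u => (parent u).isSome), w u) ≤
      2 * ∑ u ∈ Finset.univ.filter
        (fun u => ∃ v, parent u = some v ∧ Marked parent w χ u v), w u := by
    rw [← Finset.sum_fiberwise (Finset.univ.filter (fun u => (parent u).isSome))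
      (resp parent χ) w,
      ← Finset.sum_fiberwise (Finset.univ.filter
        (fun u => ∃ v, parent u = some v ∧ Marked parent w χ u v)) (resp parent χ) w,
      Finset.mul_sum]
    exact Finset.sum_le_sum fun z _ =>
      fiber_bound parent w hw χ hχ hproper hforest z
  refine ⟨by linarith, fun u => le_trans
    (dep_le_four parent w χ hproper dep hdep1 hdep0 u) (by omega), ?_⟩
  -- part 3
  set M := Finset.univ.filter
    (fun u => ∃ v, parent u = some v ∧ Marked parent w χ u v) with hM
  have hsplit : ∀ r : V,
      (∑ u ∈ Finset.univ.filter (fun u =>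
          (∃ v, parent u = some v ∧ Marked parent w χ u v) ∧
          rt u = r ∧ Even (dep u)), w u) +
      (∑ u ∈ Finset.univ.filter (fun u =>
          (∃ v, parent u = some v ∧ Marked parent w χ u v) ∧
          rt u = r ∧ ¬ Even (dep u)), w u) =
      ∑ u ∈ M.filter (fun u => rt u = r), w u := by
    intro r
    rw [hM, Finset.filter_filter]
    rw [← Finset.sum_filter_add_sum_filter_not
      (Finset.univ.filter (fun u =>
        (∃ v, parent u = some v ∧ Marked parent w χ u v) ∧ rt u = r))
      (fun u => Even (dep u)) w]
    rw [Finset.filter_filter, Finset.filter_filter]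
    congr 2 <;> · ext u; simp [and_assoc]
  have hfib : ∑ r : V, ∑ u ∈ M.filter (fun u => rt u = r), w u = ∑ u ∈ M, w u :=
    Finset.sum_fiberwise M rt w
  have hmax : ∑ u ∈ M, w u ≤ 2 * ∑ r : V, max
      (∑ u ∈ Finset.univ.filter (fun u =>
          (∃ v, parent u = some v ∧ Marked parent w χ u v) ∧
          rt u = r ∧ Even (dep u)), w u)
      (∑ u ∈ Finset.univ.filter (fun u =>
          (∃ v, parent u = some v ∧ Marked parent w χ u v) ∧
          rt u = r ∧ ¬ Even (dep u)), w u) := by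
    rw [← hfib, Finset.mul_sum]
    apply Finset.sum_le_sum
    intro r _
    rw [← hsplit r]
    have h1 := le_max_left
      (∑ u ∈ Finset.univ.filter (fun u =>
          (∃ v, parent u = some v ∧ Marked parent w χ u v) ∧
          rt u = r ∧ Even (dep u)), w u)
      (∑ u ∈ Finset.univ.filter (fun u =>
          (∃ v, parent u = some v ∧ Marked parent w χ u v) ∧
          rt u = r ∧ ¬ Even (dep u)), w u)
    have h2 := le_max_right
      (∑ u ∈ Finset.univ.filter (fun u =>
          (∃ v, parent u = some v ∧ Marked parent w χ u v) ∧
          rt u = r ∧ Even (dep u)), w u)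
      (∑ u ∈ Finset.univ.filter (fun u =>
          (∃ v, parent u = some v ∧ Marked parent w χ u v) ∧
          rt u = r ∧ ¬ Even (dep u)), w u)
    linarith
  rw [hM] at hmax
  linarith
end
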